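/- arXiv:0704.0846 — 7 statements merged into one kernel-verified Lean document; each statement's English description precedes it below -/
import Mathlib

section
/- Let A be a k-algebra generated by a set {x_j}, τ an automorphism of A, and {d_i} a higher q-skew τ-derivation on A. If for each generator x_j there is an integer N_j with d_i(x_j) = 0 for all i ≥ N_j, then {d_i} is locally nilpotent on A: for every a ∈ A there is N with d_i(a) = 0 for all i ≥ N. -/
/-- Let `A` be a `k`-algebra generated by a set `{x_j}`, `τ` an automorphism of
`A`, and `{d_i}` a higher q-skew `τ`-derivation on `A` (`d_0 = id`, the product
rule `d_n(rs) = Σ_{i=0}^n τ^{n-i}d_i(r)d_{n-i}(s)`, and `d_i τ = q^i τ d_i`).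
If `{d_i}` is locally nilpotent at each generator `x_j`, then `{d_i}` is
locally nilpotent on all of `A`. -/
theorem hqsd_locallyNilpotent_of_generators {k A ι : Type*} [Field k] [Ring A]
    [Algebra k A] (q : k) (x : ι → A) (τ : A ≃ₐ[k] A) (d : ℕ → A →ₗ[k] A)
    (hgen : Algebra.adjoin k (Set.range x) = ⊤)
    (hd0 : d 0 = LinearMap.id)
    (hprod : ∀ (n : ℕ) (r s : A), d n (r * s) =
        ∑ i ∈ Finset.range (n + 1), (⇑τ)^[n - i] (d i r) * d (n - i) s)
    (hskew : ∀ (i : ℕ) (a : A), d i (τ a) = q ^ i • τ (d i a))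
    (hnil : ∀ j : ι, ∃ N : ℕ, ∀ i ≥ N, d i (x j) = 0) :
    ∀ a : A, ∃ N : ℕ, ∀ i ≥ N, d i a = 0 := by
  have it0 : ∀ m : ℕ, (⇑τ)^[m] (0 : A) = 0 := by
    intro m
    induction m with
    | zero => rfl
    | succ m ih => rw [Function.iterate_succ_apply, map_zero, ih]
  have it1 : ∀ m : ℕ, (⇑τ)^[m] (1 : A) = 1 := by
    intro m
    induction m with
    | zero => rfl
    | succ m ih => rw [Function.iterate_succ_apply, map_one, ih]
  -- d n 1 = 0 for n ≥ 1
  have hone : ∀ n : ℕ, 1 ≤ n → d n (1 : A) = 0 := by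
    intro n
    induction n using Nat.strong_induction_on with
    | _ n IH =>
      intro hn
      obtain ⟨m, rfl⟩ := Nat.exists_eq_succ_of_ne_zero (by omega : n ≠ 0)
      have h := hprod (m + 1) 1 1
      rw [one_mul] at h
      rw [Finset.sum_range_succ, Finset.sum_range_succ'] at h
      have hz : ∀ i ∈ Finset.range m,
          (⇑τ)^[m + 1 - (i + 1)] (d (i + 1) (1:A)) * d (m + 1 - (i + 1)) (1:A) = 0 := by
        intro i hi
        rw [Finset.mem_range] at hi
        have : d (i + 1) (1 : A) = 0 := IH (i + 1) (by omega) (by omega)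
        rw [this, it0, zero_mul]
      rw [Finset.sum_eq_zero hz] at h
      simp only [Nat.sub_self, Nat.sub_zero, hd0, LinearMap.id_coe, id_eq,
        Function.iterate_zero_apply, it1, zero_add, one_mul, mul_one] at h
      nth_rewrite 1 [← zero_add (d (m + 1) (1 : A))] at h
      exact (add_right_cancel h).symm
  intro a
  have ha : a ∈ Algebra.adjoin k (Set.range x) := hgen ▸ Algebra.mem_top
  induction ha using Algebra.adjoin_induction with
  | mem y hy =>
    obtain ⟨j, rfl⟩ := hy
    exact hnil j
  | algebraMap r =>
    refine ⟨1, fun i hi => ?_⟩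
    rw [Algebra.algebraMap_eq_smul_one, map_smul, hone i hi, smul_zero]
  | add r s hr hs ihr ihs =>
    obtain ⟨Nr, hNr⟩ := ihr
    obtain ⟨Ns, hNs⟩ := ihs
    refine ⟨max Nr Ns, fun i hi => ?_⟩
    rw [map_add, hNr i (le_trans (le_max_left _ _) hi),
      hNs i (le_trans (le_max_right _ _) hi), add_zero]
  | mul r s hr hs ihr ihs =>
    obtain ⟨Nr, hNr⟩ := ihr
    obtain ⟨Ns, hNs⟩ := ihs
    refine ⟨Nr + Ns, fun n hn => ?_⟩
    rw [hprod n r s]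
    refine Finset.sum_eq_zero fun i hi => ?_
    rw [Finset.mem_range] at hi
    by_cases h : Nr ≤ i
    · rw [hNr i h, it0, zero_mul]
    · have : Ns ≤ n - i := by omega
      rw [hNs _ this, mul_zero]
end

section
/- Let {d_i} be a higher q-skew τ-derivation on a k-algebra R, τ an automorphism, and S a right denominator set in R with τ(S) = S. Then {d_i} extends uniquely to a higher q-skew τ-derivation on the localization RS^{-1}, with the extension determined by d_n(rs^{-1}) = [d_n(r) - Σ_{j=0}^{n-1} τ^{n-j}d_j(rs^{-1}) d_{n-j}(s)] s^{-1}. -/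
section SPS

variable {k B : Type*} [CommSemiring k] [Ring B] [Algebra k B]

lemma iter_map_one (σ : B ≃ₐ[k] B) (m : ℕ) : (⇑σ)^[m] (1 : B) = 1 := by
  induction m with
  | zero => rfl
  | succ m ih => rw [Function.iterate_succ_apply', ih, map_one]

lemma iter_map_zero (σ : B ≃ₐ[k] B) (m : ℕ) : (⇑σ)^[m] (0 : B) = 0 := by
  induction m with
  | zero => rfl
  | succ m ih => rw [Function.iterate_succ_apply', ih, map_zero]

lemma iter_map_mul (σ : B ≃ₐ[k] B) (m : ℕ) (x y : B) :
    (⇑σ)^[m] (x * y) = (⇑σ)^[m] x * (⇑σ)^[m] y := by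
  induction m with
  | zero => rfl
  | succ m ih => rw [Function.iterate_succ_apply', Function.iterate_succ_apply',
      Function.iterate_succ_apply', ih, map_mul]

lemma iter_map_add (σ : B ≃ₐ[k] B) (m : ℕ) (x y : B) :
    (⇑σ)^[m] (x + y) = (⇑σ)^[m] x + (⇑σ)^[m] y := by
  induction m with
  | zero => rfl
  | succ m ih => rw [Function.iterate_succ_apply', Function.iterate_succ_apply',
      Function.iterate_succ_apply', ih, map_add]

lemma iter_map_smul (σ : B ≃ₐ[k] B) (m : ℕ) (c : k) (x : B) :
    (⇑σ)^[m] (c • x) = c • (⇑σ)^[m] x := by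
  induction m with
  | zero => rfl
  | succ m ih => rw [Function.iterate_succ_apply', Function.iterate_succ_apply',
      ih, map_smul]

lemma iter_map_sum (σ : B ≃ₐ[k] B) (m : ℕ) {α : Type*} (s : Finset α) (f : α → B) :
    (⇑σ)^[m] (∑ i ∈ s, f i) = ∑ i ∈ s, (⇑σ)^[m] (f i) := by
  induction m with
  | zero => rfl
  | succ m ih =>
    rw [Function.iterate_succ_apply', ih, map_sum]
    exact Finset.sum_congr rfl fun i _ => (Function.iterate_succ_apply' _ _ _).symm

lemma iter_isUnit (σ : B ≃ₐ[k] B) (m : ℕ) {x : B} (h : IsUnit x) :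
    IsUnit ((⇑σ)^[m] x) := by
  induction m with
  | zero => exact h
  | succ m ih => rw [Function.iterate_succ_apply']
                 exact ih.map σ.toAlgHom.toRingHom.toMonoidHom

/-- Skew power series over `B` twisted by `σ` (coefficients written to the right
of powers of the variable). -/
def SPS (σ : B ≃ₐ[k] B) : Type _ := ℕ → B

variable (σ : B ≃ₐ[k] B)

instance : AddCommGroup (SPS σ) := inferInstanceAs (AddCommGroup (ℕ → B))
instance : Module k (SPS σ) := inferInstanceAs (Module k (ℕ → B))

instance : One (SPS σ) := ⟨fun n => if n = 0 then 1 else 0⟩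
instance : Mul (SPS σ) :=
  ⟨fun f g n => ∑ i ∈ Finset.range (n + 1), (⇑σ)^[n - i] (f i) * g (n - i)⟩

variable {σ}

lemma SPS.mul_coeff (f g : SPS σ) (n : ℕ) :
    (f * g) n = ∑ i ∈ Finset.range (n + 1), (⇑σ)^[n - i] (f i) * g (n - i) := rfl

lemma SPS.one_coeff (n : ℕ) : (1 : SPS σ) n = if n = 0 then 1 else 0 := rfl

lemma SPS.add_coeff (f g : SPS σ) (n : ℕ) : (f + g) n = f n + g n := rfl
lemma SPS.zero_coeff (n : ℕ) : (0 : SPS σ) n = 0 := rfl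
lemma SPS.smul_coeff (c : k) (f : SPS σ) (n : ℕ) : (c • f) n = c • f n := rfl

instance : Ring (SPS σ) :=
  { (inferInstance : AddCommGroup (SPS σ)), (inferInstance : One (SPS σ)),
      (inferInstance : Mul (SPS σ)) with
    left_distrib := by
      intro f g h
      funext n
      show (∑ i ∈ Finset.range (n+1), (⇑σ)^[n-i] (f i) * (g (n-i) + h (n-i))) = _
      rw [Finset.sum_congr rfl fun i _ => mul_add _ _ _, Finset.sum_add_distrib]
      rfl
    right_distrib := by
      intro f g h
      funext n
      show (∑ i ∈ Finset.range (n+1), (⇑σ)^[n-i] (f i + g i) * h (n-i)) = _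
      rw [Finset.sum_congr rfl fun i _ => by rw [iter_map_add, add_mul],
        Finset.sum_add_distrib]
      rfl
    zero_mul := by
      intro f
      funext n
      show (∑ i ∈ Finset.range (n+1), (⇑σ)^[n-i] (0 : B) * f (n-i)) = 0
      simp [iter_map_zero]
    mul_zero := by
      intro f
      funext n
      show (∑ i ∈ Finset.range (n+1), (⇑σ)^[n-i] (f i) * (0:B)) = 0
      simp
    one_mul := by
      intro f
      funext n
      show (∑ i ∈ Finset.range (n+1),
        (⇑σ)^[n-i] (if i = 0 then (1:B) else 0) * f (n-i)) = f n
      rw [Finset.sum_eq_single_of_mem 0 (Finset.mem_range.mpr (Nat.succ_pos n))]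
      · simp [iter_map_one]
      · intro j _ hj
        simp [hj, iter_map_zero]
    mul_one := by
      intro f
      funext n
      show (∑ i ∈ Finset.range (n+1),
        (⇑σ)^[n-i] (f i) * (if n - i = 0 then (1:B) else 0)) = f n
      rw [Finset.sum_eq_single_of_mem n (Finset.mem_range.mpr (Nat.lt_succ_self n))]
      · simp
      · intro j hj hjn
        have : n - j ≠ 0 :=
          Nat.sub_ne_zero_of_lt (lt_of_le_of_ne (Nat.lt_succ_iff.mp
            (Finset.mem_range.mp hj)) hjn)
        simp [this]
    mul_assoc := by
      intro f g h
      funext n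
      show (∑ i ∈ Finset.range (n+1), (⇑σ)^[n-i] ((f * g) i) * h (n-i))
        = ∑ i ∈ Finset.range (n+1), (⇑σ)^[n-i] (f i) * (g * h) (n-i)
      have LHS : (∑ i ∈ Finset.range (n+1), (⇑σ)^[n-i] ((f * g) i) * h (n-i))
          = ∑ i ∈ Finset.range (n+1), ∑ j ∈ Finset.range (i+1),
              ((⇑σ)^[n-j] (f j) * (⇑σ)^[n-i] (g (i-j))) * h (n-i) := by
        refine Finset.sum_congr rfl fun i hi => ?_
        rw [SPS.mul_coeff, iter_map_sum, Finset.sum_mul]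
        refine Finset.sum_congr rfl fun j hj => ?_
        have hji : j ≤ i := Nat.lt_succ_iff.mp (Finset.mem_range.mp hj)
        have hin : i ≤ n := Nat.lt_succ_iff.mp (Finset.mem_range.mp hi)
        rw [iter_map_mul, ← Function.iterate_add_apply,
          tsub_add_tsub_cancel hin hji]
      rw [LHS]
      have comm : (∑ i ∈ Finset.range (n+1), ∑ j ∈ Finset.range (i+1),
              ((⇑σ)^[n-j] (f j) * (⇑σ)^[n-i] (g (i-j))) * h (n-i))
          = ∑ j ∈ Finset.range (n+1), ∑ i ∈ Finset.Ico j (n+1),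
              ((⇑σ)^[n-j] (f j) * (⇑σ)^[n-i] (g (i-j))) * h (n-i) := by
        refine Finset.sum_comm' fun i j => ?_
        simp only [Finset.mem_range, Finset.mem_Ico, Nat.lt_succ_iff]
        omega
      rw [comm]
      refine Finset.sum_congr rfl fun j hj => ?_
      have hjn : j ≤ n := Nat.lt_succ_iff.mp (Finset.mem_range.mp hj)
      rw [Finset.sum_Ico_eq_sum_range]
      have : n + 1 - j = (n - j) + 1 := by omega
      rw [this, SPS.mul_coeff, Finset.mul_sum]
      refine Finset.sum_congr rfl fun b hb => ?_
      have hbn : b ≤ n - j := Nat.lt_succ_iff.mp (Finset.mem_range.mp hb)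
      have h1 : n - (j + b) = n - j - b := by omega
      have h2 : j + b - j = b := by omega
      rw [h1, h2, mul_assoc] }

lemma SPS.smul_mul (c : k) (f g : SPS σ) : (c • f) * g = c • (f * g) := by
  funext n
  show (∑ i ∈ Finset.range (n+1), (⇑σ)^[n-i] (c • f i) * g (n-i)) = c • (f * g) n
  rw [SPS.mul_coeff, Finset.smul_sum]
  exact Finset.sum_congr rfl fun i _ => by rw [iter_map_smul, smul_mul_assoc]

/-- right inverse of a power series whose constant term is a unit -/
noncomputable def SPS.rinv (σ : B ≃ₐ[k] B) (f : ℕ → B) : ℕ → B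
  | 0 => Ring.inverse (f 0)
  | (n+1) => -(Ring.inverse ((⇑σ)^[n+1] (f 0)) *
      ∑ j ∈ (Finset.range (n+1)).attach,
        (⇑σ)^[j.1] (f (n+1-j.1)) * SPS.rinv σ f j.1)
  termination_by n => n
  decreasing_by exact Finset.mem_range.mp j.2

/-- left inverse of a power series whose constant term is a unit -/
noncomputable def SPS.linv (σ : B ≃ₐ[k] B) (f : ℕ → B) : ℕ → B
  | 0 => Ring.inverse (f 0)
  | (n+1) => -((∑ j ∈ (Finset.range (n+1)).attach,
      (⇑σ)^[n+1-j.1] (SPS.linv σ f j.1) * f (n+1-j.1)) * Ring.inverse (f 0))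
  termination_by n => n
  decreasing_by exact Finset.mem_range.mp j.2

theorem SPS.isUnit_of_isUnit_coeff_zero {f : SPS σ} (h : IsUnit (f 0)) :
    IsUnit f := by
  set g : SPS σ := SPS.rinv σ f with hg
  set g' : SPS σ := SPS.linv σ f with hg'
  have hfg : f * g = 1 := by
    funext n
    match n with
    | 0 =>
      show (∑ i ∈ Finset.range 1, (⇑σ)^[0-i] (f i) * g (0-i)) = _
      simp only [Finset.sum_range_one, Nat.sub_zero, Function.iterate_zero, id_eq]
      show f 0 * SPS.rinv σ f 0 = (1 : SPS σ) 0
      rw [SPS.rinv.eq_1 σ f, Ring.mul_inverse_cancel _ h]; rfl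
    | (n+1) =>
      show (∑ i ∈ Finset.range (n+2), (⇑σ)^[n+1-i] (f i) * g (n+1-i)) = _
      rw [Finset.sum_range_succ']
      have hlast : (⇑σ)^[n+1-0] (f 0) * g (n+1-0)
          = -(∑ j ∈ Finset.range (n+1), (⇑σ)^[j] (f (n+1-j)) * g j) := by
        show (⇑σ)^[n+1] (f 0) * SPS.rinv σ f (n+1) = _
        rw [SPS.rinv.eq_2 σ f n]
        rw [mul_neg, ← mul_assoc, Ring.mul_inverse_cancel _ (iter_isUnit σ (n+1) h),
          one_mul]
        rw [Finset.sum_attach (Finset.range (n+1)) (fun j => (⇑σ)^[j] (f (n+1-j)) * g j)]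
      rw [hlast]
      have hfirst : (∑ i ∈ Finset.range (n+1), (⇑σ)^[n+1-(i+1)] (f (i+1)) * g (n+1-(i+1)))
          = ∑ j ∈ Finset.range (n+1), (⇑σ)^[j] (f (n+1-j)) * g j := by
        rw [← Finset.sum_range_reflect (fun j => (⇑σ)^[j] (f (n+1-j)) * g j) (n+1)]
        refine Finset.sum_congr rfl fun i hi => ?_
        have hin : i ≤ n := Nat.lt_succ_iff.mp (Finset.mem_range.mp hi)
        have e1 : n + 1 - 1 - i = n - i := by omega
        have e2 : n + 1 - (n - i) = i + 1 := by omega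
        have e3 : n + 1 - (i+1) = n - i := by omega
        rw [e1, e2, e3]
      rw [hfirst, add_neg_cancel]
      show _ = (1 : SPS σ) (n+1)
      rw [SPS.one_coeff]; simp
  have hgf : g' * f = 1 := by
    funext n
    match n with
    | 0 =>
      show (∑ i ∈ Finset.range 1, (⇑σ)^[0-i] (g' i) * f (0-i)) = _
      simp only [Finset.sum_range_one, Nat.sub_zero, Function.iterate_zero, id_eq]
      show SPS.linv σ f 0 * f 0 = (1 : SPS σ) 0
      rw [SPS.linv.eq_1 σ f, Ring.inverse_mul_cancel _ h]; rfl
    | (n+1) =>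
      show (∑ i ∈ Finset.range (n+2), (⇑σ)^[n+1-i] (g' i) * f (n+1-i)) = _
      rw [Finset.sum_range_succ]
      have hlast : (⇑σ)^[n+1-(n+1)] (g' (n+1)) * f (n+1-(n+1))
          = -(∑ j ∈ Finset.range (n+1), (⇑σ)^[n+1-j] (g' j) * f (n+1-j)) := by
        simp only [Nat.sub_self, Function.iterate_zero, id_eq]
        show SPS.linv σ f (n+1) * f 0 = _
        rw [SPS.linv.eq_2 σ f n, neg_mul, mul_assoc, Ring.inverse_mul_cancel _ h, mul_one]
        rw [Finset.sum_attach (Finset.range (n+1))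
          (fun j => (⇑σ)^[n+1-j] (SPS.linv σ f j) * f (n+1-j))]
      rw [hlast, add_neg_cancel]
      show _ = (1 : SPS σ) (n+1)
      rw [SPS.one_coeff]; simp
  have hgg : g' = g := by
    calc g' = g' * (f * g) := by rw [hfg, mul_one]
    _ = (g' * f) * g := by rw [mul_assoc]
    _ = g := by rw [hgf, one_mul]
  exact ⟨⟨f, g, hfg, by rw [← hgg]; exact hgf⟩, rfl⟩

end SPS


/-- Let `{d_i}` be a higher q-skew `τ`-derivation on a `k`-algebra `R` and `S`
a right denominator set in `R` with `τ(S) = S`.  Then `{d_i}` extends uniquely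
to a higher q-skew `τ`-derivation on the localization `B = RS⁻¹`, the extension
being determined by
`d_n(rs⁻¹) = [d_n(r) - Σ_{j=0}^{n-1} τ^{n-j}d_j(rs⁻¹) d_{n-j}(s)] s⁻¹`. -/
theorem hqsd_extends_to_localization {k R B : Type*} [Field k] [Ring R]
    [Algebra k R] [Ring B] [Algebra k B]
    (q : k) (τ : R ≃ₐ[k] R) (d : ℕ → R →ₗ[k] R)
    (hd0 : d 0 = LinearMap.id)
    (hprod : ∀ (n : ℕ) (r s : R), d n (r * s) =
        ∑ i ∈ Finset.range (n + 1), (⇑τ)^[n - i] (d i r) * d (n - i) s)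
    (hskew : ∀ (i : ℕ) (r : R), d i (τ r) = q ^ i • τ (d i r))
    (S : Submonoid R) (hτS : ∀ s : R, s ∈ S ↔ τ s ∈ S)
    -- `B` together with `ι : R → B` is the localization `RS⁻¹`:
    (ι : R →ₐ[k] B) (hunit : ∀ s ∈ S, IsUnit (ι s))
    (hfrac : ∀ b : B, ∃ r, ∃ s ∈ S, b * ι s = ι r)
    (hker : ∀ r : R, ι r = 0 → ∃ s ∈ S, r * s = 0)
    -- the (unique) extension of `τ` to `B`:
    (τB : B ≃ₐ[k] B) (hτB : ∀ r : R, τB (ι r) = ι (τ r)) :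
    ∃! D : ℕ → B →ₗ[k] B,
      D 0 = LinearMap.id ∧
      (∀ (i : ℕ) (r : R), D i (ι r) = ι (d i r)) ∧
      (∀ (n : ℕ) (a b : B), D n (a * b) =
          ∑ i ∈ Finset.range (n + 1), (⇑τB)^[n - i] (D i a) * D (n - i) b) ∧
      (∀ (i : ℕ) (b : B), D i (τB b) = q ^ i • τB (D i b)) ∧
      (∀ (n : ℕ) (r s : R), s ∈ S → ∀ b : B, b * ι s = ι r →
          D n b * ι s =
            ι (d n r) - ∑ j ∈ Finset.range n, (⇑τB)^[n - j] (D j b) * ι (d (n - j) s)) := by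
  classical
  -- `d n 1 = 0` for positive `n`
  have hd1 : ∀ n : ℕ, 0 < n → d n (1 : R) = 0 := by
    intro n
    induction n using Nat.strong_induction_on with
    | _ n ih =>
      intro hn
      obtain ⟨m, rfl⟩ : ∃ m, n = m + 1 := ⟨n - 1, by omega⟩
      have h := hprod (m + 1) 1 1
      rw [one_mul, Finset.sum_range_succ] at h
      have hmid : ∑ i ∈ Finset.range (m + 1), (⇑τ)^[m + 1 - i] (d i 1) * d (m + 1 - i) 1
          = (⇑τ)^[m + 1] (d 0 1) * d (m + 1) 1 := by
        refine Finset.sum_eq_single_of_mem 0 (Finset.mem_range.mpr (Nat.succ_pos m)) ?_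
        intro j hj hj0
        rw [ih j (Finset.mem_range.mp hj) (Nat.pos_of_ne_zero hj0), iter_map_zero, zero_mul]
      rw [hmid] at h
      simp only [hd0, LinearMap.id_coe, id_eq, iter_map_one, one_mul, Nat.sub_self,
        Function.iterate_zero, mul_one] at h
      exact left_eq_add.mp h
  -- iterates of `τB` on the image of `ι`
  have hιτit : ∀ (m : ℕ) (r : R), (⇑τB)^[m] (ι r) = ι ((⇑τ)^[m] r) := by
    intro m
    induction m with
    | zero => intro r; rfl
    | succ m ih =>
      intro r
      rw [Function.iterate_succ_apply, Function.iterate_succ_apply, hτB, ih]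
  -- kernel lemma
  have hker' : ∀ a b : R, ι a = ι b → ∃ t ∈ S, a * t = b * t := by
    intro a b h
    obtain ⟨t, ht, h0⟩ := hker (a - b) (by rw [map_sub, h, sub_self])
    exact ⟨t, ht, by rw [← sub_eq_zero, ← sub_mul]; exact h0⟩
  have hcanB : ∀ {s : R}, s ∈ S → ∀ {x y : B}, x * ι s = y * ι s → x = y :=
    fun hs _ _ h => (hunit _ hs).mul_right_cancel h
  -- the right Ore condition
  have hore : ∀ r s : R, s ∈ S → ∃ c ∈ S, ∃ r', r * c = s * r' := by
    intro r s hs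
    obtain ⟨u, hu⟩ := hunit s hs
    obtain ⟨r₁, s₁, hs₁, h1⟩ := hfrac ((↑u⁻¹ : B) * ι r)
    have h2 : ι (r * s₁) = ι (s * r₁) := by
      rw [map_mul, map_mul]
      calc ι r * ι s₁ = ↑u * (↑u⁻¹ * (ι r * ι s₁)) := (Units.mul_inv_cancel_left _ _).symm
        _ = ↑u * (↑u⁻¹ * ι r * ι s₁) := by rw [mul_assoc (↑u⁻¹ : B)]
        _ = ↑u * ι r₁ := by rw [h1]
        _ = ι s * ι r₁ := by rw [hu]
    obtain ⟨t, ht, h3⟩ := hker' _ _ h2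
    exact ⟨s₁ * t, S.mul_mem hs₁ ht, r₁ * t, by rw [← mul_assoc, h3, mul_assoc]⟩
  -- the series of a ring element
  obtain ⟨Ψ, hΨc⟩ : ∃ Ψ : R → SPS τB, ∀ r n, Ψ r n = ι (d n r) :=
    ⟨fun r n => ι (d n r), fun _ _ => rfl⟩
  have hΨadd : ∀ r r' : R, Ψ (r + r') = Ψ r + Ψ r' := by
    intro r r'; funext n
    rw [SPS.add_coeff, hΨc, hΨc, hΨc, map_add, map_add]
  have hΨsmul : ∀ (c : k) (r : R), Ψ (c • r) = c • Ψ r := by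
    intro c r; funext n
    rw [SPS.smul_coeff, hΨc, hΨc, map_smul, map_smul]
  have hΨone : Ψ 1 = 1 := by
    funext n
    rw [hΨc, SPS.one_coeff]
    rcases Nat.eq_zero_or_pos n with hn | hn
    · simp [hn, hd0]
    · simp [Nat.pos_iff_ne_zero.mp hn, hd1 n hn]
  have hΨmul : ∀ r r' : R, Ψ (r * r') = Ψ r * Ψ r' := by
    intro r r'; funext n
    rw [SPS.mul_coeff, hΨc, hprod, map_sum]
    refine Finset.sum_congr rfl fun i _ => ?_
    rw [map_mul, hΨc, hΨc, hιτit]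
  have hΨunit : ∀ s ∈ S, IsUnit (Ψ s) := by
    intro s hs
    refine SPS.isUnit_of_isUnit_coeff_zero ?_
    rw [hΨc, hd0]
    exact hunit s hs
  have hcanPS : ∀ {s : R}, s ∈ S → ∀ {x y : SPS τB}, x * Ψ s = y * Ψ s → x = y :=
    fun hs _ _ h => (hΨunit _ hs).mul_right_cancel h
  -- well-definedness of fractions
  have hwd : ∀ (b : B) (r s r' s' : R), s ∈ S → s' ∈ S →
      b * ι s = ι r → b * ι s' = ι r' →
      ∀ x x' : SPS τB, x * Ψ s = Ψ r → x' * Ψ s' = Ψ r' → x = x' := by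
    intro b r s r' s' hs hs' hb hb' x x' hx hx'
    obtain ⟨c, hc, r₁, hcr⟩ := hore s' s hs
    have hι2 : ι (r' * c) = ι (r * r₁) := by
      calc ι (r' * c) = ι r' * ι c := map_mul ι _ _
        _ = b * ι s' * ι c := by rw [hb']
        _ = b * ι (s' * c) := by rw [mul_assoc, ← map_mul]
        _ = b * ι (s * r₁) := by rw [hcr]
        _ = b * ι s * ι r₁ := by rw [map_mul, mul_assoc]
        _ = ι r * ι r₁ := by rw [hb]
        _ = ι (r * r₁) := (map_mul ι _ _).symm
    obtain ⟨t, ht, h3⟩ := hker' _ _ hι2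
    have hy : s' * (c * t) = s * (r₁ * t) := by rw [← mul_assoc, hcr, mul_assoc]
    have hn : r' * (c * t) = r * (r₁ * t) := by rw [← mul_assoc, h3, mul_assoc]
    have hsct : s' * (c * t) ∈ S := S.mul_mem hs' (S.mul_mem hc ht)
    apply hcanPS hsct
    calc x * Ψ (s' * (c * t)) = x * Ψ (s * (r₁ * t)) := by rw [hy]
      _ = x * Ψ s * Ψ (r₁ * t) := by rw [hΨmul, mul_assoc]
      _ = Ψ r * Ψ (r₁ * t) := by rw [hx]
      _ = Ψ (r * (r₁ * t)) := (hΨmul _ _).symm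
      _ = Ψ (r' * (c * t)) := by rw [hn]
      _ = Ψ r' * Ψ (c * t) := hΨmul _ _
      _ = x' * Ψ s' * Ψ (c * t) := by rw [hx']
      _ = x' * Ψ (s' * (c * t)) := by rw [hΨmul s' (c * t), mul_assoc]
  -- the extension, as a series-valued function
  obtain ⟨F, hFc⟩ : ∃ F : B → SPS τB, ∀ (b : B) (r s : R), s ∈ S → b * ι s = ι r →
      F b * Ψ s = Ψ r := by
    choose num den hden hrep using hfrac
    refine ⟨fun b => Ψ (num b) * Ring.inverse (Ψ (den b)), ?_⟩
    intro b r s hs hb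
    show Ψ (num b) * Ring.inverse (Ψ (den b)) * Ψ s = Ψ r
    have h1 : (Ψ (num b) * Ring.inverse (Ψ (den b))) * Ψ (den b) = Ψ (num b) := by
      rw [mul_assoc, Ring.inverse_mul_cancel _ (hΨunit _ (hden b)), mul_one]
    have h2 : (Ψ r * Ring.inverse (Ψ s)) * Ψ s = Ψ r := by
      rw [mul_assoc, Ring.inverse_mul_cancel _ (hΨunit _ hs), mul_one]
    rw [hwd b (num b) (den b) r s (hden b) hs (hrep b) hb _ _ h1 h2, h2]
  have hFadd : ∀ a b : B, F (a + b) = F a + F b := by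
    intro a b
    obtain ⟨ra, sa, hsa, hra⟩ := hfrac a
    obtain ⟨rb, sb, hsb, hrb⟩ := hfrac b
    obtain ⟨c, hc, x, hcx⟩ := hore sa sb hsb
    have hu : sa * c ∈ S := S.mul_mem hsa hc
    have hA : a * ι (sa * c) = ι (ra * c) := by
      rw [map_mul, ← mul_assoc, hra, ← map_mul]
    have hB : b * ι (sa * c) = ι (rb * x) := by
      rw [hcx, map_mul, ← mul_assoc, hrb, ← map_mul]
    have hAB : (a + b) * ι (sa * c) = ι (ra * c + rb * x) := by
      rw [add_mul, hA, hB, map_add]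
    apply hcanPS hu
    rw [hFc _ _ _ hu hAB, add_mul, hFc _ _ _ hu hA, hFc _ _ _ hu hB, hΨadd]
  have hFsmul : ∀ (c : k) (b : B), F (c • b) = c • F b := by
    intro c b
    obtain ⟨r, s, hs, hr⟩ := hfrac b
    have h1 : (c • b) * ι s = ι (c • r) := by rw [smul_mul_assoc, hr, map_smul]
    apply hcanPS hs
    rw [hFc _ _ _ hs h1, SPS.smul_mul, hFc _ _ _ hs hr, hΨsmul]
  have hFmul : ∀ a b : B, F (a * b) = F a * F b := by
    intro a b
    obtain ⟨ra, sa, hsa, hra⟩ := hfrac a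
    obtain ⟨rb, sb, hsb, hrb⟩ := hfrac b
    obtain ⟨c, hc, r₃, hcr⟩ := hore rb sa hsa
    have hu : sb * c ∈ S := S.mul_mem hsb hc
    have hA : (a * b) * ι (sb * c) = ι (ra * r₃) := by
      calc (a * b) * ι (sb * c) = a * (b * ι sb) * ι c := by
            rw [map_mul]; simp only [mul_assoc]
        _ = a * ι (rb * c) := by rw [hrb, mul_assoc, ← map_mul]
        _ = a * ι sa * ι r₃ := by rw [hcr, map_mul, mul_assoc]
        _ = ι (ra * r₃) := by rw [hra, ← map_mul]
    apply hcanPS hu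
    rw [hFc _ _ _ hu hA, hΨmul]
    calc Ψ ra * Ψ r₃ = F a * Ψ sa * Ψ r₃ := by rw [hFc a ra sa hsa hra]
      _ = F a * Ψ (sa * r₃) := by rw [hΨmul, mul_assoc]
      _ = F a * Ψ (rb * c) := by rw [hcr]
      _ = F a * ((F b * Ψ sb) * Ψ c) := by rw [hFc b rb sb hsb hrb, hΨmul]
      _ = (F a * F b) * Ψ (sb * c) := by rw [hΨmul, mul_assoc, mul_assoc]
  have hFι : ∀ r : R, F (ι r) = Ψ r := by
    intro r
    have h1 : ι r * ι (1 : R) = ι r := by rw [map_one, mul_one]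
    have := hFc (ι r) r 1 S.one_mem h1
    rwa [hΨone, mul_one] at this
  -- skew-commutation with τB
  have hΨτ : ∀ (r : R) (n : ℕ), Ψ (τ r) n = q ^ n • τB (Ψ r n) := by
    intro r n; rw [hΨc, hΨc, hskew, map_smul, hτB]
  have hFτ : ∀ (b : B) (n : ℕ), F (τB b) n = q ^ n • τB (F b n) := by
    intro b
    obtain ⟨r, s, hs, hr⟩ := hfrac b
    have hts : τ s ∈ S := (hτS s).mp hs
    have h1 : τB b * ι (τ s) = ι (τ r) := by rw [← hτB, ← hτB, ← map_mul, hr]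
    have h2 := hFc (τB b) (τ r) (τ s) hts h1
    obtain ⟨G, hG⟩ : ∃ G : SPS τB, ∀ n, G n = q ^ n • τB (F b n) :=
      ⟨fun n => q ^ n • τB (F b n), fun _ => rfl⟩
    have hGmul : G * Ψ (τ s) = Ψ (τ r) := by
      funext n
      rw [SPS.mul_coeff]
      have hterm : ∀ i ∈ Finset.range (n + 1),
          (⇑τB)^[n - i] (G i) * Ψ (τ s) (n - i)
            = q ^ n • τB ((⇑τB)^[n - i] (F b i) * Ψ s (n - i)) := by
        intro i hi
        have hin : i ≤ n := Nat.lt_succ_iff.mp (Finset.mem_range.mp hi)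
        rw [hG, hΨτ, iter_map_smul, smul_mul_smul_comm, ← pow_add,
          Nat.add_sub_cancel' hin, ← Function.iterate_succ_apply,
          Function.iterate_succ_apply', map_mul]
      rw [Finset.sum_congr rfl hterm, ← Finset.smul_sum, ← map_sum,
        ← SPS.mul_coeff, hFc b r s hs hr, ← hΨτ]
    have := hcanPS hts (h2.trans hGmul.symm)
    intro n
    rw [this, hG]
  -- zeroth coefficient
  have hF0 : ∀ b : B, F b 0 = b := by
    intro b
    obtain ⟨r, s, hs, hr⟩ := hfrac b
    have h : (F b * Ψ s) 0 = Ψ r 0 := by rw [hFc b r s hs hr]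
    rw [SPS.mul_coeff, Finset.sum_range_one, hΨc, hΨc, hd0] at h
    simp only [Nat.sub_zero, Function.iterate_zero, id_eq, LinearMap.id_coe] at h
    exact hcanB hs (h.trans hr.symm)
  -- the defining local formula
  have hF5 : ∀ (n : ℕ) (r s : R), s ∈ S → ∀ b : B, b * ι s = ι r →
      F b n * ι s = ι (d n r)
        - ∑ j ∈ Finset.range n, (⇑τB)^[n - j] (F b j) * ι (d (n - j) s) := by
    intro n r s hs b hb
    have h : (F b * Ψ s) n = Ψ r n := by rw [hFc b r s hs hb]
    rw [SPS.mul_coeff, Finset.sum_range_succ] at h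
    simp only [Nat.sub_self, Function.iterate_zero, id_eq, hΨc, hd0,
      LinearMap.id_coe] at h
    exact eq_sub_of_add_eq' h
  -- assemble the extension
  refine ⟨fun n =>
    { toFun := fun b => F b n
      map_add' := fun a b => by show F (a + b) n = F a n + F b n; rw [hFadd]; rfl
      map_smul' := fun c b => by
        show F (c • b) n = (RingHom.id k) c • F b n
        rw [hFsmul]; rfl }, ⟨?_, ?_, ?_, ?_, ?_⟩, ?_⟩
  · ext b; exact hF0 b
  · intro i r
    show F (ι r) i = ι (d i r)
    rw [hFι, hΨc]
  · intro n a b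
    show F (a * b) n = _
    rw [hFmul]
    exact SPS.mul_coeff (F a) (F b) n
  · intro i b
    exact hFτ b i
  · intro n r s hs b hb
    exact hF5 n r s hs b hb
  · rintro D' ⟨h0', -, -, -, hloc'⟩
    have key : ∀ (n : ℕ) (b : B), D' n b = F b n := by
      intro n
      induction n using Nat.strong_induction_on with
      | _ n ih =>
        intro b
        obtain ⟨r, s, hs, hr⟩ := hfrac b
        have h1 := hloc' n r s hs b hr
        have h2 := hF5 n r s hs b hr
        rw [Finset.sum_congr rfl fun j hj => by
          rw [ih j (Finset.mem_range.mp hj) b]] at h1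
        exact hcanB hs (h1.trans h2.symm)
    funext n
    ext b
    exact key n b
end

section
/- Let A = R[x; τ, δ] be a q-skew polynomial ring with δ locally nilpotent on R. Then the multiplicative set S = {x^n : n ≥ 0} is a (two-sided) Ore (denominator) set in A. -/
/-- Let `A = R[x; τ, δ]` be a q-skew polynomial ring (`x r = τ(r) x + δ(r)`,
`δτ = qτδ`) with `δ` locally nilpotent on `R`.  Then the multiplicative set
`S = {xⁿ : n ≥ 0}` is a two-sided Ore (denominator) set in `A`: for every
`a ∈ A` and every `xⁿ ∈ S` we have `Sa ∩ Axⁿ ≠ ∅` and `aS ∩ xⁿA ≠ ∅`. -/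
theorem powers_x_ore_set {k R A : Type*} [Field k] [Ring R] [Algebra k R]
    [Ring A]
    (q : k) (hq0 : q ≠ 0)
    (τ : R ≃ₐ[k] R) (δ : R →ₗ[k] R)
    (hder : ∀ r s : R, δ (r * s) = τ r * δ s + δ r * s)
    (hskew : ∀ r : R, δ (τ r) = q • τ (δ r))
    (hnil : ∀ r : R, ∃ n : ℕ, (⇑δ)^[n] r = 0)
    (ι : R →+* A) (x : A)
    (hrel : ∀ r : R, x * ι r = ι (τ r) * x + ι (δ r))
    (hspan : ∀ a : A, ∃ (n : ℕ) (c : ℕ → R),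
        a = ∑ i ∈ Finset.range n, ι (c i) * x ^ i) :
    ∀ (a : A) (n : ℕ),
      (∃ (m : ℕ) (b : A), x ^ m * a = b * x ^ n) ∧
      (∃ (m : ℕ) (b : A), a * x ^ m = x ^ n * b) := by
  -- iterates of δ commute with scalars
  have hsmul : ∀ (n : ℕ) (c : k) (r : R), (⇑δ)^[n] (c • r) = c • (⇑δ)^[n] r := by
    intro n
    induction n with
    | zero => intro c r; simp
    | succ n ih =>
      intro c r
      rw [Function.iterate_succ_apply, map_smul, ih, ← Function.iterate_succ_apply]
  -- the inverse-skew relation: δ ∘ τ⁻¹ = q⁻¹ • τ⁻¹ ∘ δ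
  have hstep : ∀ s : R, δ (τ.symm s) = q⁻¹ • τ.symm (δ s) := by
    intro s
    have h1 : δ s = q • τ (δ (τ.symm s)) := by
      have := hskew (τ.symm s)
      rwa [τ.apply_symm_apply] at this
    have h2 : τ (δ (τ.symm s)) = q⁻¹ • δ s := by
      rw [h1, smul_smul, inv_mul_cancel₀ hq0, one_smul]
    calc δ (τ.symm s) = τ.symm (τ (δ (τ.symm s))) := by rw [τ.symm_apply_apply]
      _ = τ.symm (q⁻¹ • δ s) := by rw [h2]
      _ = q⁻¹ • τ.symm (δ s) := by rw [map_smul]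
  -- τ⁻¹ preserves nilpotency index of δ
  have hcomm : ∀ (n : ℕ) (s : R),
      (⇑δ)^[n] (τ.symm s) = (q⁻¹) ^ n • τ.symm ((⇑δ)^[n] s) := by
    intro n
    induction n with
    | zero => intro s; simp
    | succ n ih =>
      intro s
      rw [Function.iterate_succ_apply, hstep, hsmul, ih, smul_smul,
        ← pow_succ', ← Function.iterate_succ_apply]
  -- Left Ore, single generator, degree 1
  have L1 : ∀ (n : ℕ) (r : R), (⇑δ)^[n] r = 0 →
      ∃ (m : ℕ) (b : A), x ^ m * ι r = b * x := by
    intro n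
    induction n with
    | zero =>
      intro r hr
      simp only [Function.iterate_zero, id_eq] at hr
      exact ⟨0, 0, by simp [hr]⟩
    | succ n ih =>
      intro r hr
      rw [Function.iterate_succ_apply] at hr
      obtain ⟨m, b, hb⟩ := ih (δ r) hr
      refine ⟨m + 1, x ^ m * ι (τ r) + b, ?_⟩
      rw [pow_succ, mul_assoc, hrel, mul_add, ← mul_assoc, hb, add_mul]
  -- Right Ore, single generator, degree 1
  have R1 : ∀ (n : ℕ) (s : R), (⇑δ)^[n] s = 0 →
      ∃ (m : ℕ) (c : A), ι s * x ^ m = x * c := by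
    intro n
    induction n with
    | zero =>
      intro s hs
      simp only [Function.iterate_zero, id_eq] at hs
      exact ⟨0, 0, by simp [hs]⟩
    | succ n ih =>
      intro s hs
      have hkey : ι s * x = x * ι (τ.symm s) - ι (δ (τ.symm s)) := by
        have := hrel (τ.symm s)
        rw [τ.apply_symm_apply] at this
        rw [this]; noncomm_ring
      have ht : (⇑δ)^[n] (δ (τ.symm s)) = 0 := by
        rw [← Function.iterate_succ_apply, hcomm, hs, map_zero, smul_zero]
      obtain ⟨m, c, hc⟩ := ih (δ (τ.symm s)) ht
      refine ⟨m + 1, ι (τ.symm s) * x ^ m - c, ?_⟩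
      calc ι s * x ^ (m + 1) = (ι s * x) * x ^ m := by rw [pow_succ']; noncomm_ring
        _ = x * (ι (τ.symm s) * x ^ m) - ι (δ (τ.symm s)) * x ^ m := by
            rw [hkey]; noncomm_ring
        _ = x * (ι (τ.symm s) * x ^ m) - x * c := by rw [hc]
        _ = x * (ι (τ.symm s) * x ^ m - c) := by noncomm_ring
  -- Left Ore, general element, degree 1
  have L2 : ∀ a : A, ∃ (m : ℕ) (b : A), x ^ m * a = b * x := by
    intro a
    obtain ⟨n, c, rfl⟩ := hspan a
    have H : ∀ i : ℕ, ∃ (m : ℕ) (b : A), x ^ m * ι (c i) = b * x := by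
      intro i
      obtain ⟨ni, hni⟩ := hnil (c i)
      exact L1 ni (c i) hni
    choose f g hg using H
    set M := (Finset.range n).sup f with hM
    refine ⟨M, ∑ i ∈ Finset.range n, x ^ (M - f i) * g i * x ^ i, ?_⟩
    rw [Finset.mul_sum, Finset.sum_mul]
    refine Finset.sum_congr rfl ?_
    intro i hi
    have hfi : f i ≤ M := Finset.le_sup hi
    have hx : x ^ M = x ^ (M - f i) * x ^ (f i) := by
      rw [← pow_add, Nat.sub_add_cancel hfi]
    calc x ^ M * (ι (c i) * x ^ i)
        = x ^ (M - f i) * (x ^ (f i) * ι (c i)) * x ^ i := by rw [hx]; noncomm_ring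
      _ = x ^ (M - f i) * (g i * x) * x ^ i := by rw [hg i]
      _ = x ^ (M - f i) * g i * (x * x ^ i) := by noncomm_ring
      _ = x ^ (M - f i) * g i * x ^ i * x := by rw [← pow_succ', pow_succ]; noncomm_ring
  -- Right Ore, general element, degree 1
  have R2 : ∀ a : A, ∃ (m : ℕ) (b : A), a * x ^ m = x * b := by
    intro a
    obtain ⟨n, c, rfl⟩ := hspan a
    have H : ∀ i : ℕ, ∃ (m : ℕ) (b : A), ι (c i) * x ^ m = x * b := by
      intro i
      obtain ⟨ni, hni⟩ := hnil (c i)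
      exact R1 ni (c i) hni
    choose f g hg using H
    set M := (Finset.range n).sup f with hM
    refine ⟨M, ∑ i ∈ Finset.range n, g i * x ^ (i + M - f i), ?_⟩
    rw [Finset.sum_mul, Finset.mul_sum]
    refine Finset.sum_congr rfl ?_
    intro i hi
    have hfi : f i ≤ M := Finset.le_sup hi
    have hx : x ^ i * x ^ M = x ^ (f i) * x ^ (i + M - f i) := by
      rw [← pow_add, ← pow_add]
      congr 1
      omega
    calc ι (c i) * x ^ i * x ^ M = ι (c i) * (x ^ i * x ^ M) := by noncomm_ring
      _ = ι (c i) * x ^ (f i) * x ^ (i + M - f i) := by rw [hx]; noncomm_ring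
      _ = x * g i * x ^ (i + M - f i) := by rw [hg i]
      _ = x * (g i * x ^ (i + M - f i)) := by noncomm_ring
  -- conclude by induction on n
  intro a n
  constructor
  · induction n with
    | zero => exact ⟨0, a, by simp⟩
    | succ n ih =>
      obtain ⟨m, b, hb⟩ := ih
      obtain ⟨m', b', hb'⟩ := L2 b
      refine ⟨m' + m, b', ?_⟩
      calc x ^ (m' + m) * a = x ^ m' * (x ^ m * a) := by rw [pow_add]; noncomm_ring
        _ = (x ^ m' * b) * x ^ n := by rw [hb]; noncomm_ring
        _ = b' * (x * x ^ n) := by rw [hb']; noncomm_ring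
        _ = b' * x ^ (n + 1) := by rw [pow_succ']
  · induction n with
    | zero => exact ⟨0, a, by simp⟩
    | succ n ih =>
      obtain ⟨m, b, hb⟩ := ih
      obtain ⟨m', b', hb'⟩ := R2 b
      refine ⟨m + m', b', ?_⟩
      calc a * x ^ (m + m') = (a * x ^ m) * x ^ m' := by rw [pow_add]; noncomm_ring
        _ = x ^ n * (b * x ^ m') := by rw [hb]; noncomm_ring
        _ = x ^ n * (x * b') := by rw [hb']
        _ = x ^ (n + 1) * b' := by rw [pow_succ]; noncomm_ring
end

section
/- With the setup of the derivation-removing map, f: R → AS^{-1} given by f(r) = Σ_{n=0}^∞ q^{n(n+1)/2}(q-1)^{-n} d_n τ^{-n}(r) x^{-n} is a k-algebra homomorphism: it is k-linear, f(1) = 1, and f(rs) = f(r)f(s) for all r, s ∈ R. -/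
/-- The `q`-integer `(m)_q = q^(m-1) + ⋯ + q + 1`. -/
def qNat {k : Type*} [CommRing k] (q : k) (m : ℕ) : k := ∑ i ∈ Finset.range m, q ^ i

/-- The `q`-factorial `(m)!_q`. -/
def qFact {k : Type*} [CommRing k] (q : k) : ℕ → k
  | 0 => 1
  | n + 1 => qNat q (n + 1) * qFact q n

/-- The `q`-binomial (Gaussian) coefficient `binom(n,m)_q`, defined via the
Pascal recursion `binom(n+1,m+1)_q = binom(n,m)_q + q^(m+1) binom(n,m+1)_q`. -/
def qBinom {k : Type*} [CommRing k] (q : k) : ℕ → ℕ → k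
  | _, 0 => 1
  | 0, _ + 1 => 0
  | n + 1, m + 1 => qBinom q n m + q ^ (m + 1) * qBinom q n (m + 1)

lemma qBinom_gt {k : Type*} [CommRing k] (q : k) : ∀ n m : ℕ, n < m → qBinom q n m = 0
  | 0, _ + 1, _ => rfl
  | n + 1, m + 1, h => by
    show qBinom q n m + q ^ (m + 1) * qBinom q n (m + 1) = 0
    rw [qBinom_gt q n m (by omega), qBinom_gt q n (m+1) (by omega)]
    ring

lemma qBinom_diag {k : Type*} [CommRing k] (q : k) : ∀ n : ℕ, qBinom q n n = 1
  | 0 => rfl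
  | n + 1 => by
    show qBinom q n n + q ^ (n + 1) * qBinom q n (n + 1) = 1
    rw [qBinom_diag q n, qBinom_gt q n (n+1) (by omega)]
    ring

lemma qBinom_succ_self {k : Type*} [CommRing k] (q : k) :
    ∀ n : ℕ, qBinom q (n+1) n = qNat q (n+1)
  | 0 => by
    show (1 : k) = qNat q 1
    simp [qNat]
  | n + 1 => by
    show qBinom q (n+1) n + q ^ (n + 1) * qBinom q (n+1) (n + 1) = qNat q (n+2)
    rw [qBinom_succ_self q n, qBinom_diag q (n+1)]
    show qNat q (n+1) + q^(n+1) * 1 = qNat q (n+2)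
    rw [qNat, qNat, Finset.sum_range_succ, Finset.sum_range_succ, Finset.sum_range_succ]
    ring

lemma tri_succ (n : ℕ) : (n+1) * (n+2) / 2 = n * (n+1) / 2 + (n+1) := by
  have h : (n+1)*(n+2) = n*(n+1) + (n+1)*2 := by ring
  rw [h, Nat.add_mul_div_right _ _ (by norm_num : (0:ℕ) < 2)]

lemma tri_add (m : ℕ) : ∀ p : ℕ, m*(m+1)/2 + p*(p+1)/2 + m*p = (m+p)*((m+p)+1)/2
  | 0 => by simp
  | p + 1 => by
    have h1 := tri_succ p
    have h2 := tri_succ (m+p)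
    have h3 := tri_add m p
    have h4 : (m+(p+1)) = (m+p)+1 := by ring
    rw [h4, h2, ← h3, show p+1+1 = p+2 from rfl, h1, Nat.mul_succ]
    ring

section IterAux
variable {k R : Type*} [Field k] [Ring R] [Algebra k R]

lemma iter_smul (e : R ≃ₐ[k] R) (n : ℕ) (a : k) (v : R) :
    (⇑e)^[n] (a • v) = a • (⇑e)^[n] v := by
  induction n with
  | zero => rfl
  | succ n ih => rw [Function.iterate_succ_apply', Function.iterate_succ_apply', ih, map_smul]

lemma iter_zero (e : R ≃ₐ[k] R) (n : ℕ) : (⇑e)^[n] (0 : R) = 0 := by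
  induction n with
  | zero => rfl
  | succ n ih => rw [Function.iterate_succ_apply', ih, map_zero]

lemma iter_addsmul (e : R ≃ₐ[k] R) (n : ℕ) (a : k) (u v : R) :
    (⇑e)^[n] (a • u + v) = a • (⇑e)^[n] u + (⇑e)^[n] v := by
  induction n with
  | zero => rfl
  | succ n ih => rw [Function.iterate_succ_apply', Function.iterate_succ_apply',
      Function.iterate_succ_apply', ih, map_add, map_smul]

lemma iter_cancel (e : R ≃ₐ[k] R) (n : ℕ) (v : R) : (⇑e)^[n] ((⇑e.symm)^[n] v) = v :=
  (Function.LeftInverse.iterate e.apply_symm_apply n) v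

lemma iter_comm_symm (e : R ≃ₐ[k] R) (n : ℕ) (r : R) :
    (⇑e.symm)^[n] (e r) = e ((⇑e.symm)^[n] r) := by
  cases n with
  | zero => rfl
  | succ n =>
    rw [Function.iterate_succ_apply, e.symm_apply_apply,
      Function.iterate_succ_apply' (⇑e.symm) n r, e.apply_symm_apply]

end IterAux

/-- The derivation-removing map
`f(r) = Σ_{n≥0} q^{n(n+1)/2}(q-1)^{-n} d_n τ^{-n}(r) x^{-n} : R → AS⁻¹` is a
`k`-algebra homomorphism: `k`-linear, unital, and multiplicative. -/
theorem f_algebra_hom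
    {k R B : Type*} [Field k] [Ring R] [Algebra k R] [Ring B] [Algebra k B]
    (q : k) (hq0 : q ≠ 0) (hq1 : q ≠ 1)
    (τ : R ≃ₐ[k] R) (δ : R →ₗ[k] R)
    (hder : ∀ r s : R, δ (r * s) = τ r * δ s + δ r * s)
    (hskew : ∀ r : R, δ (τ r) = q • τ (δ r))
    -- `{d_i}` is a locally nilpotent iterative higher q-skew τ-derivation extending δ:
    (d : ℕ → R →ₗ[k] R)
    (hd0 : d 0 = LinearMap.id) (hd1 : d 1 = δ)
    (hprod : ∀ (n : ℕ) (r s : R), d n (r * s) =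
        ∑ i ∈ Finset.range (n + 1), (⇑τ)^[n - i] (d i r) * d (n - i) s)
    (hdskew : ∀ (i : ℕ) (r : R), d i (τ r) = q ^ i • τ (d i r))
    (hiter : ∀ (i j : ℕ) (r : R), d i (d j r) = qBinom q (i + j) j • d (i + j) r)
    (hnil : ∀ r : R, ∃ N : ℕ, ∀ i ≥ N, d i r = 0)
    -- `B` plays the role of the localization `AS⁻¹` of `A = R[x; τ, δ]`,
    -- in which `x` is invertible and `x ι(r) = ι(τ r) x + ι(δ r)`:
    (ι : R →ₐ[k] B) (x : B) (hx : IsUnit x)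
    (hrel : ∀ r : R, x * ι r = ι (τ r) * x + ι (δ r))
    -- the derivation-removing map `f`:
    (f : R → B)
    (hf : ∀ r : R, f r = ∑ᶠ n : ℕ,
        (q ^ (n * (n + 1) / 2) * ((q - 1)⁻¹) ^ n) •
          (ι (d n ((⇑τ.symm)^[n] r)) * ((hx.unit⁻¹ : Bˣ) : B) ^ n))
    : f 1 = 1 ∧ (∀ r s : R, f (r * s) = f r * f s) ∧
      (∀ (c : k) (r s : R), f (c • r + s) = c • f r + f s) := by
  classical
  have hq1' : q - 1 ≠ 0 := sub_ne_zero.mpr hq1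
  have hqpow : ∀ n : ℕ, (q : k) ^ n ≠ 0 := fun n => pow_ne_zero n hq0
  set y : B := ((hx.unit⁻¹ : Bˣ) : B) with hy
  have hxy : x * y = 1 := hx.mul_val_inv
  have hyx : y * x = 1 := hx.val_inv_mul
  have hxyp : ∀ n : ℕ, x * y ^ (n+1) = y ^ n := by
    intro n; rw [pow_succ', ← mul_assoc, hxy, one_mul]
  have hypx : ∀ n : ℕ, y ^ (n+1) * x = y ^ n := by
    intro n; rw [pow_succ, mul_assoc, hyx, mul_one]
  set c : ℕ → k := fun n => q ^ (n * (n + 1) / 2) * ((q - 1)⁻¹) ^ n with hc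
  set E : ℕ → R → R := fun n r => d n ((⇑τ.symm)^[n] r) with hEdef
  set F : R → ℕ → B := fun r n => c n • (ι (E n r) * y ^ n) with hFdef
  have hfF : ∀ r : R, f r = ∑ᶠ n : ℕ, F r n := by
    intro r; simp only [hFdef, hEdef, hc]; exact hf r
  -- moving d past iterates of τ.symm
  have hdσ1 : ∀ (i : ℕ) (r : R), d i (τ.symm r) = (q ^ i)⁻¹ • τ.symm (d i r) := by
    intro i r
    have h := hdskew i (τ.symm r)
    rw [τ.apply_symm_apply] at h
    have h2 : τ.symm (d i r) = q ^ i • d i (τ.symm r) := by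
      rw [h, map_smul, τ.symm_apply_apply]
    rw [h2, inv_smul_smul₀ (hqpow i)]
  have hdσ : ∀ (i n : ℕ) (r : R),
      d i ((⇑τ.symm)^[n] r) = ((q ^ i)⁻¹) ^ n • (⇑τ.symm)^[n] (d i r) := by
    intro i n
    induction n with
    | zero => intro r; simp
    | succ n ih =>
      intro r
      rw [Function.iterate_succ_apply, ih (τ.symm r), hdσ1 i r,
        iter_smul τ.symm, smul_smul, ← Function.iterate_succ_apply, ← pow_succ]
  have hEzero : ∀ (u : R) (n m : ℕ), d n u = 0 → E n ((⇑τ.symm)^[m] u) = 0 := by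
    intro u n m h
    simp only [hEdef]
    rw [← Function.iterate_add_apply, hdσ, h, iter_zero, smul_zero]
  have hEzero0 : ∀ (u : R) (n : ℕ), d n u = 0 → E n u = 0 := by
    intro u n h
    have h2 := hEzero u n 0 h
    simpa using h2
  have hFbound : ∀ (u : R) (N : ℕ), (∀ i ≥ N, d i u = 0) → ∀ n, N ≤ n → F u n = 0 := by
    intro u N h n hn
    simp only [hFdef]
    rw [hEzero0 u n (h n hn), map_zero, zero_mul, smul_zero]
  have hsum : ∀ (u : R) (N : ℕ), (∀ i ≥ N, d i u = 0) →
      f u = ∑ n ∈ Finset.range N, F u n := by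
    intro u N h
    rw [hfF u]
    apply finsum_eq_sum_of_support_subset
    intro n hn
    simp only [Function.mem_support] at hn
    simp only [Finset.coe_range, Set.mem_Iio]
    by_contra hcon
    exact hn (hFbound u N h n (by omega))
  -- τ and δ action on E
  have hτE : ∀ (n : ℕ) (r : R), τ (E n r) = (q ^ n)⁻¹ • E n (τ r) := by
    intro n r
    have h1 : E n (τ r) = q ^ n • τ (E n r) := by
      simp only [hEdef]
      rw [iter_comm_symm, hdskew]
    rw [h1, inv_smul_smul₀ (hqpow n)]
  have hδE : ∀ (n : ℕ) (r : R), δ (E n r) = qNat q (n+1) • E (n+1) (τ r) := by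
    intro n r
    have h1 : E (n+1) (τ r) = d (n+1) ((⇑τ.symm)^[n] r) := by
      simp only [hEdef]
      rw [Function.iterate_succ_apply, τ.symm_apply_apply]
    rw [h1, ← hd1]
    simp only [hEdef]
    rw [hiter 1 n, show 1 + n = n + 1 from Nat.add_comm 1 n, qBinom_succ_self]
  -- coefficient identities
  have hcsucc : ∀ n : ℕ, c (n+1) = c n * ((q - 1)⁻¹ * q ^ (n+1)) := by
    intro n
    simp only [hc]
    rw [tri_succ n, pow_add, pow_succ]
    ring
  have hkey1 : ∀ n : ℕ, c (n+1) * (q ^ (n+1))⁻¹ + c n * qNat q (n+1) = c (n+1) := by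
    intro n
    have hg : qNat q (n+1) * (q - 1) = q ^ (n+1) - 1 := geom_sum_mul q (n+1)
    have h3 : (q - 1)⁻¹ + qNat q (n+1) = (q - 1)⁻¹ * q ^ (n+1) := by
      field_simp
      linear_combination hg
    rw [hcsucc n]
    calc c n * ((q-1)⁻¹ * q ^ (n+1)) * (q ^ (n+1))⁻¹ + c n * qNat q (n+1)
        = c n * ((q-1)⁻¹ * (q ^ (n+1) * (q ^ (n+1))⁻¹) + qNat q (n+1)) := by ring
      _ = c n * ((q-1)⁻¹ + qNat q (n+1)) := by
          rw [mul_inv_cancel₀ (hqpow (n+1)), mul_one]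
      _ = c n * ((q-1)⁻¹ * q ^ (n+1)) := by rw [h3]
  have hkey2 : ∀ m p : ℕ, c m * c p = c (m+p) * (q⁻¹) ^ (m*p) := by
    intro m p
    simp only [hc]
    rw [← tri_add m p, pow_add, pow_add, pow_add]
    have hcancel : q ^ (m*p) * (q⁻¹) ^ (m*p) = 1 := by
      rw [inv_pow, mul_inv_cancel₀ (hqpow _)]
    linear_combination (-(q ^ (m*(m+1)/2) * q ^ (p*(p+1)/2) * ((q-1)⁻¹)^m * ((q-1)⁻¹)^p)) * hcancel
  -- the intertwining identity
  have hI : ∀ r : R, x * f r = f (τ r) * x := by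
    intro r
    obtain ⟨Nr, hNr⟩ := hnil r
    obtain ⟨Nt, hNt⟩ := hnil (τ r)
    set M := max Nr Nt with hM
    have hbr : ∀ i ≥ M + 1, d i r = 0 := fun i hi => hNr i (by omega)
    have hbt : ∀ i ≥ M + 1, d i (τ r) = 0 := fun i hi => hNt i (by omega)
    set P : ℕ → B := fun n => (c n * (q ^ n)⁻¹) • (ι (E n (τ r)) * (x * y ^ n)) with hP
    set Q : ℕ → B := fun n => (c n * qNat q (n+1)) • (ι (E (n+1) (τ r)) * y ^ n) with hQ
    have hterm : ∀ n : ℕ, x * F r n = P n + Q n := by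
      intro n
      simp only [hFdef, hP, hQ]
      rw [mul_smul_comm, ← mul_assoc, hrel (E n r), hτE n r, hδE n r, map_smul, map_smul]
      simp only [smul_mul_assoc, add_mul, smul_add, smul_smul, mul_assoc]
    have hQM : Q M = 0 := by
      simp only [hQ]
      rw [hEzero0 (τ r) (M+1) (hbt (M+1) (le_refl _)), map_zero, zero_mul, smul_zero]
    have hP0 : P 0 = ι (τ r) * x := by
      simp [hP, hc, hEdef, hd0]
    have hLHS : x * f r =
        (∑ n ∈ Finset.range M, c (n+1) • (ι (E (n+1) (τ r)) * y ^ n)) + ι (τ r) * x := by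
      rw [hsum r (M+1) hbr, Finset.mul_sum]
      calc ∑ n ∈ Finset.range (M+1), x * F r n
          = ∑ n ∈ Finset.range (M+1), (P n + Q n) :=
            Finset.sum_congr rfl fun n _ => hterm n
        _ = (∑ n ∈ Finset.range (M+1), P n) + ∑ n ∈ Finset.range (M+1), Q n :=
            Finset.sum_add_distrib
        _ = ((∑ n ∈ Finset.range M, P (n+1)) + P 0) + ((∑ n ∈ Finset.range M, Q n) + Q M) := by
            rw [Finset.sum_range_succ' P M, Finset.sum_range_succ Q M]
        _ = (∑ n ∈ Finset.range M, (P (n+1) + Q n)) + P 0 := by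
            rw [hQM, add_zero, Finset.sum_add_distrib]
            abel
        _ = (∑ n ∈ Finset.range M, c (n+1) • (ι (E (n+1) (τ r)) * y ^ n)) + ι (τ r) * x := by
            rw [hP0]
            congr 1
            refine Finset.sum_congr rfl fun n _ => ?_
            simp only [hP, hQ]
            rw [hxyp n, ← add_smul, hkey1 n]
    have hRHS : f (τ r) * x =
        (∑ n ∈ Finset.range M, c (n+1) • (ι (E (n+1) (τ r)) * y ^ n)) + ι (τ r) * x := by
      rw [hsum (τ r) (M+1) hbt, Finset.sum_mul]
      rw [Finset.sum_range_succ' (fun n => F (τ r) n * x) M]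
      congr 1
      · refine Finset.sum_congr rfl fun n _ => ?_
        simp only [hFdef]
        rw [smul_mul_assoc, mul_assoc, hypx n]
      · simp [hFdef, hc, hEdef, hd0]
    rw [hLHS, hRHS]
  have hIy : ∀ r : R, y * f r = f (τ.symm r) * y := by
    intro r
    have h := hI (τ.symm r)
    rw [τ.apply_symm_apply] at h
    calc y * f r = y * (f r * (x * y)) := by rw [hxy, mul_one]
      _ = y * (f r * x) * y := by rw [← mul_assoc (f r) x y, ← mul_assoc]
      _ = y * (x * f (τ.symm r)) * y := by rw [h]
      _ = (y * x) * f (τ.symm r) * y := by rw [← mul_assoc y x (f (τ.symm r))]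
      _ = f (τ.symm r) * y := by rw [hyx, one_mul]
  have hpow : ∀ (m : ℕ) (r : R), y ^ m * f r = f ((⇑τ.symm)^[m] r) * y ^ m := by
    intro m
    induction m with
    | zero => intro r; simp
    | succ m ih =>
      intro r
      calc y ^ (m+1) * f r = y ^ m * (y * f r) := by rw [pow_succ, mul_assoc]
        _ = y ^ m * (f (τ.symm r) * y) := by rw [hIy r]
        _ = (y ^ m * f (τ.symm r)) * y := by rw [← mul_assoc]
        _ = (f ((⇑τ.symm)^[m] (τ.symm r)) * y ^ m) * y := by rw [ih (τ.symm r)]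
        _ = f ((⇑τ.symm)^[m+1] r) * y ^ (m+1) := by
            rw [Function.iterate_succ_apply, mul_assoc, ← pow_succ]
  -- multiplicativity
  have hmul : ∀ r s : R, f (r * s) = f r * f s := by
    intro r s
    obtain ⟨Nr, hNr⟩ := hnil r
    obtain ⟨Ns, hNs⟩ := hnil s
    obtain ⟨Nm, hNm⟩ := hnil (r * s)
    set K := max Nr Ns with hK
    set L := max (K + K) Nm with hL
    set G : ℕ → ℕ → B := fun m p => (c (m+p) * (q⁻¹) ^ (m*p)) •
        (ι (E m r) * (ι (E p ((⇑τ.symm)^[m] s)) * y ^ (m+p))) with hG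
    have hGz1 : ∀ m p : ℕ, K ≤ m → G m p = 0 := by
      intro m p hm
      simp only [hG]
      rw [hEzero0 r m (hNr m (by omega)), map_zero, zero_mul, smul_zero]
    have hGz2 : ∀ m p : ℕ, K ≤ p → G m p = 0 := by
      intro m p hp
      simp only [hG]
      rw [hEzero s p m (hNs p (by omega)), map_zero, zero_mul, mul_zero, smul_zero]
    -- the product side
    have hbσ : ∀ m : ℕ, ∀ i ≥ K, d i ((⇑τ.symm)^[m] s) = 0 := by
      intro m i hi
      rw [hdσ, hNs i (by omega), iter_zero, smul_zero]
    have hbr : ∀ i ≥ K, d i r = 0 := fun i hi => hNr i (by omega)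
    have hprodside : f r * f s = ∑ m ∈ Finset.range K, ∑ p ∈ Finset.range K, G m p := by
      rw [hsum r K hbr, Finset.sum_mul]
      refine Finset.sum_congr rfl fun m _ => ?_
      have h1 : F r m * f s = c m • (ι (E m r) * (f ((⇑τ.symm)^[m] s) * y ^ m)) := by
        simp only [hFdef]
        rw [smul_mul_assoc, mul_assoc, hpow m s]
      rw [h1, hsum ((⇑τ.symm)^[m] s) K (hbσ m), Finset.sum_mul, Finset.mul_sum,
        Finset.smul_sum]
      refine Finset.sum_congr rfl fun p _ => ?_
      simp only [hFdef, hG]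
      rw [smul_mul_assoc, mul_smul_comm, smul_smul, hkey2 m p,
        mul_assoc (ι (E p ((⇑τ.symm)^[m] s))) (y ^ p) (y ^ m), ← pow_add, Nat.add_comm p m]
    -- the diagonal expansion of F (r*s)
    have hFrs : ∀ N : ℕ, F (r*s) N = ∑ i ∈ Finset.range (N+1), G i (N - i) := by
      intro N
      have hE1 : E N (r*s) = ∑ i ∈ Finset.range (N+1),
          ((q⁻¹) ^ (i*(N-i))) • (E i r * E (N-i) ((⇑τ.symm)^[i] s)) := by
        simp only [hEdef]
        rw [iterate_map_mul, hprod N]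
        refine Finset.sum_congr rfl fun i hi => ?_
        have hiN : i ≤ N := by
          simp only [Finset.mem_range] at hi; omega
        -- second factor
        have hsplit : (⇑τ.symm)^[N] s = (⇑τ.symm)^[N-i] ((⇑τ.symm)^[i] s) := by
          rw [← Function.iterate_add_apply, Nat.sub_add_cancel hiN]
        -- first factor
        have hfirst : (⇑τ)^[N-i] (d i ((⇑τ.symm)^[N] r)) =
            ((q⁻¹) ^ (i*(N-i))) • d i ((⇑τ.symm)^[i] r) := by
          have h2 : (⇑τ.symm)^[N] r = (⇑τ.symm)^[N-i] ((⇑τ.symm)^[i] r) := by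
            rw [← Function.iterate_add_apply, Nat.sub_add_cancel hiN]
          rw [h2, hdσ i (N-i) ((⇑τ.symm)^[i] r), iter_smul τ, iter_cancel τ (N-i)]
          congr 1
          rw [inv_pow, ← pow_mul, ← inv_pow]
        rw [hsplit, hfirst, smul_mul_assoc]
      simp only [hFdef, hG]
      rw [hE1, map_sum, Finset.sum_mul, Finset.smul_sum]
      refine Finset.sum_congr rfl fun i hi => ?_
      have hiN : i ≤ N := by simp only [Finset.mem_range] at hi; omega
      rw [map_smul, smul_mul_assoc, smul_smul, map_mul,
        mul_assoc (ι (E i r)), Nat.add_sub_cancel' hiN]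
    -- bounds for f (r*s)
    have hbm : ∀ i ≥ L, d i (r*s) = 0 := by
      intro i hi
      exact hNm i (by omega)
    have hdiag : f (r * s) = ∑ m ∈ Finset.range K, ∑ p ∈ Finset.range K, G m p := by
      rw [hsum (r*s) L hbm]
      have h1 : ∀ N ∈ Finset.range L, F (r*s) N = ∑ i ∈ Finset.range (N+1), G i (N-i) :=
        fun N _ => hFrs N
      rw [Finset.sum_congr rfl h1, Finset.sum_range_diag_flip L G]
      have hKL : K ≤ L := by omega
      rw [← Finset.sum_subset (Finset.range_subset_range.mpr hKL) ?out]
      case out =>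
        intro m hm hmK
        simp only [Finset.mem_range] at hm hmK
        apply Finset.sum_eq_zero
        intro p _
        exact hGz1 m p (by omega)
      refine Finset.sum_congr rfl fun m hm => ?_
      simp only [Finset.mem_range] at hm
      have hKLm : K ≤ L - m := by omega
      rw [← Finset.sum_subset (Finset.range_subset_range.mpr hKLm) ?out2]
      case out2 =>
        intro p hp hpK
        simp only [Finset.mem_range] at hp hpK
        exact hGz2 m p (by omega)
    rw [hdiag, hprodside]
  -- d_n 1 = 0 for n ≥ 1
  have hd_one : ∀ n : ℕ, n ≠ 0 → d n (1:R) = 0 := by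
    intro n
    induction n using Nat.strong_induction_on with
    | _ n ih =>
      intro hn
      obtain ⟨m, rfl⟩ : ∃ m, n = m + 1 := ⟨n - 1, by omega⟩
      have h := hprod (m+1) 1 1
      rw [mul_one] at h
      rw [Finset.sum_range_succ, Finset.sum_range_succ'] at h
      have hmid : ∀ i ∈ Finset.range m,
          (⇑τ)^[m + 1 - (i+1)] (d (i+1) (1:R)) * d (m + 1 - (i+1)) (1:R) = 0 := by
        intro i hi
        simp only [Finset.mem_range] at hi
        rw [ih (i+1) (by omega) (by omega), iter_zero τ, zero_mul]
      rw [Finset.sum_eq_zero hmid, zero_add] at h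
      rw [Nat.sub_self, Nat.sub_zero, Function.iterate_zero_apply, hd0] at h
      simp only [LinearMap.id_coe, id_eq, iterate_map_one, one_mul, mul_one] at h
      have h2 : d (m+1) (1:R) + 0 = d (m+1) 1 + d (m+1) 1 := by
        rw [add_zero]; exact h
      exact (add_left_cancel h2).symm
  have hf1 : f 1 = 1 := by
    have hb : ∀ i ≥ 1, d i (1:R) = 0 := fun i hi => hd_one i (by omega)
    rw [hsum 1 1 hb, Finset.sum_range_one]
    simp [hFdef, hc, hEdef, hd0]
  -- linearity
  have hlin : ∀ (a : k) (r s : R), f (a • r + s) = a • f r + f s := by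
    intro a r s
    obtain ⟨Nr, hNr⟩ := hnil r
    obtain ⟨Ns, hNs⟩ := hnil s
    set M := max Nr Ns with hM
    have hbr : ∀ i ≥ M, d i r = 0 := fun i hi => hNr i (by omega)
    have hbs : ∀ i ≥ M, d i s = 0 := fun i hi => hNs i (by omega)
    have hbc : ∀ i ≥ M, d i (a • r + s) = 0 := by
      intro i hi
      rw [map_add, map_smul, hbr i hi, hbs i hi, smul_zero, add_zero]
    rw [hsum _ M hbc, hsum r M hbr, hsum s M hbs, Finset.smul_sum, ← Finset.sum_add_distrib]
    refine Finset.sum_congr rfl fun n _ => ?_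
    have hEn : E n (a • r + s) = a • E n r + E n s := by
      simp only [hEdef]
      rw [iter_addsmul τ.symm, map_add, map_smul]
    simp only [hFdef]
    rw [hEn, map_add, map_smul, add_mul, smul_mul_assoc, smul_add, smul_comm (c n) a]
  exact ⟨hf1, hmul, hlin⟩
end

section
/- Let S = R[x; τ, δ] and A = R[x; τ, δ][y; σ] where σ(R) = R and σ(x) = λx for some λ ∈ k^×. Then A can be re-expressed as an iterated skew polynomial ring A = R[y; σ'][x; τ', δ'], where σ' = σ|_R, τ'|_R = τ, δ'|_R = δ, τ'(y) = λ^{-1}y, and δ'(y) = 0. Moreover if (τ, δ) is q-skew (δτ = qτδ) then (τ', δ') is q-skew. -/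
namespace SwitchVarsAux
open Finsupp


/-- Evaluate a "sum of singles" transform at a point. -/
theorem sum_single_comp_apply {α M : Type*} [DecidableEq α] [AddCommMonoid M]
    {g : α → M → M} (h0 : ∀ n, g n 0 = 0)
    (hadd : ∀ n a b, g n (a + b) = g n a + g n b) (c : α →₀ M) (m : α) :
    (c.sum fun n r => Finsupp.single n (g n r)) m = g m (c m) := by
  induction c using Finsupp.induction with
  | zero => simp [h0]
  | single_add n r c hn hr ih =>
    rw [Finsupp.sum_add_index' (fun a => by simp [h0]) (fun a b₁ b₂ => by simp [hadd]),
      Finsupp.sum_single_index (by simp [h0])]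
    simp only [Finsupp.add_apply, ih, Finsupp.single_apply]
    by_cases h : n = m
    · subst h
      have hc : c n = 0 := Finsupp.notMem_support_iff.mp hn
      simp [hc, h0, hadd]
    · simp [h]

/-- The workhorse: summing a function over a "sum of singles" transform. -/
theorem sum_single_sum {α β M M' N : Type*} [AddCommMonoid M] [AddCommMonoid M']
    [AddCommMonoid N] (c : α →₀ M) (f : α → β) (g : α → M → M') (h : β → M' → N)
    (hg0 : ∀ n, g n 0 = 0) (hgadd : ∀ n a b, g n (a + b) = g n a + g n b)
    (hh0 : ∀ b, h b 0 = 0) (hhadd : ∀ b a₁ a₂, h b (a₁ + a₂) = h b a₁ + h b a₂) :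
    ((c.sum fun n r => Finsupp.single (f n) (g n r)).sum h)
      = c.sum fun n r => h (f n) (g n r) := by
  rw [Finsupp.sum_sum_index hh0 hhadd]
  exact Finsupp.sum_congr fun n _ => Finsupp.sum_single_index (hh0 _)


variable {k R A : Type*} [Field k] [Ring R] [Algebra k R] [Ring A] [Algebra k A]

theorem ypow_comm (ι : R →ₐ[k] A) (y : A) (σR : R ≃ₐ[k] R)
    (hrely : ∀ r : R, y * ι r = ι (σR r) * y) (m : ℕ) (s : R) :
    y ^ m * ι s = ι ((σR ^ m) s) * y ^ m := by
  induction m generalizing s with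
  | zero => simp
  | succ m ih =>
    rw [pow_succ, mul_assoc, hrely, ← mul_assoc, ih, mul_assoc, ← pow_succ,
      pow_succ σR m, AlgEquiv.mul_apply]

theorem ypow_x {l : k} (x y : A) (hrelyx : y * x = l • (x * y)) (n : ℕ) :
    y ^ n * x = l ^ n • (x * y ^ n) := by
  induction n with
  | zero => simp
  | succ n ih =>
    rw [pow_succ, mul_assoc, hrelyx, mul_smul_comm, ← mul_assoc, ih, smul_mul_assoc,
      smul_smul, mul_assoc, ← pow_succ, ← pow_succ']

theorem x_ypow {l : k} (hl : l ≠ 0) (x y : A) (hrelyx : y * x = l • (x * y)) (n : ℕ) :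
    x * y ^ n = (l⁻¹) ^ n • (y ^ n * x) := by
  rw [ypow_x x y hrelyx, smul_smul, ← mul_pow, inv_mul_cancel₀ hl, one_pow, one_smul]

theorem ypow_xpow {l : k} (x y : A) (hrelyx : y * x = l • (x * y)) (j i : ℕ) :
    y ^ j * x ^ i = l ^ (i * j) • (x ^ i * y ^ j) := by
  induction i with
  | zero => simp
  | succ i ih =>
    rw [pow_succ, ← mul_assoc, ih, smul_mul_assoc, mul_assoc, ypow_x x y hrelyx j,
      mul_smul_comm, smul_smul, ← mul_assoc, ← pow_succ, ← pow_add, Nat.succ_mul]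

theorem sum_single_comp_apply' {α β M : Type*} [DecidableEq β] [AddCommMonoid M]
    {f : α → β} (hf : Function.Injective f) {g : α → M → M} (h0 : ∀ n, g n 0 = 0)
    (hadd : ∀ n a b, g n (a + b) = g n a + g n b) (c : α →₀ M) (m : α) :
    (c.sum fun n r => Finsupp.single (f n) (g n r)) (f m) = g m (c m) := by
  induction c using Finsupp.induction with
  | zero => simp [h0]
  | single_add n r c hn hr ih =>
    rw [Finsupp.sum_add_index' (fun a => by simp [h0]) (fun a b₁ b₂ => by simp [hadd]),
      Finsupp.sum_single_index (by simp [h0])]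
    simp only [Finsupp.add_apply, ih]
    by_cases h : n = m
    · subst h
      have hc : c n = 0 := Finsupp.notMem_support_iff.mp hn
      simp [hc, h0]
    · have h1 : Finsupp.single (f n) (g n r) (f m) = 0 :=
        Finsupp.single_eq_of_ne (fun hfe => h (hf hfe.symm))
      have h2 : (Finsupp.single n r) m = 0 := Finsupp.single_eq_of_ne (Ne.symm h)
      simp [h1, h2]

theorem sum_single_comp_apply_ne {α β M : Type*} [DecidableEq β] [AddCommMonoid M]
    {f : α → β} {g : α → M → M} (h0 : ∀ n, g n 0 = 0)
    (hadd : ∀ n a b, g n (a + b) = g n a + g n b) (c : α →₀ M) (b : β)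
    (hb : ∀ n, f n ≠ b) :
    (c.sum fun n r => Finsupp.single (f n) (g n r)) b = 0 := by
  induction c using Finsupp.induction with
  | zero => simp
  | single_add n r c hn hr ih =>
    rw [Finsupp.sum_add_index' (fun a => by simp [h0]) (fun a b₁ b₂ => by simp [hadd]),
      Finsupp.sum_single_index (by simp [h0])]
    rw [Finsupp.add_apply, Finsupp.single_eq_of_ne (hb n).symm, zero_add]
    exact ih


variable {k R A : Type*} [Field k] [Ring R] [Algebra k R] [Ring A] [Algebra k A]

/-- Polynomials in `y` with coefficients in `R`. -/
def Fc (ι : R →ₐ[k] A) (y : A) (c : ℕ →₀ R) : A := c.sum fun n r => ι r * y ^ n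

/-- Polynomials in `x, y` order. -/
def G2 (ι : R →ₐ[k] A) (x y : A) (c : (ℕ × ℕ) →₀ R) : A :=
  c.sum fun p r => ι r * x ^ p.1 * y ^ p.2

theorem Fc_add (ι : R →ₐ[k] A) (y : A) (c d : ℕ →₀ R) :
    Fc ι y (c + d) = Fc ι y c + Fc ι y d :=
  Finsupp.sum_add_index' (fun n => by simp) (fun n a b => by rw [map_add, add_mul])

theorem Fc_single (ι : R →ₐ[k] A) (y : A) (n : ℕ) (r : R) :
    Fc ι y (Finsupp.single n r) = ι r * y ^ n :=
  Finsupp.sum_single_index (by simp)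

theorem G2_add (ι : R →ₐ[k] A) (x y : A) (c d : (ℕ × ℕ) →₀ R) :
    G2 ι x y (c + d) = G2 ι x y c + G2 ι x y d :=
  Finsupp.sum_add_index' (fun n => by simp) (fun n a b => by rw [map_add, add_mul, add_mul])

theorem Fc_mem_adjoin (ι : R →ₐ[k] A) (y : A) (c : ℕ →₀ R) :
    Fc ι y c ∈ Algebra.adjoin k (Set.range ⇑ι ∪ {y}) := by
  induction c using Finsupp.induction with
  | zero => simp only [Fc, Finsupp.sum_zero_index]; exact zero_mem _
  | single_add n r c _ _ ih =>
    rw [Fc_add, Fc_single]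
    have hy : y ∈ Algebra.adjoin k (Set.range ⇑ι ∪ {y}) :=
      Algebra.subset_adjoin (Set.mem_union_right _ rfl)
    have hr' : ι r ∈ Algebra.adjoin k (Set.range ⇑ι ∪ {y}) :=
      Algebra.subset_adjoin (Set.mem_union_left _ ⟨_, rfl⟩)
    exact add_mem (mul_mem hr' (pow_mem hy n)) ih

theorem exists_Fc_mul (ι : R →ₐ[k] A) (y : A) (σR : R ≃ₐ[k] R)
    (hrely : ∀ r : R, y * ι r = ι (σR r) * y) (c d : ℕ →₀ R) :
    ∃ e, Fc ι y c * Fc ι y d = Fc ι y e := by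
  induction c using Finsupp.induction with
  | zero =>
    refine ⟨0, ?_⟩
    simp [Fc, Finsupp.sum_zero_index]
  | single_add m r c hm hr ih =>
    obtain ⟨e', he'⟩ := ih
    refine ⟨(d.sum fun n s => Finsupp.single (m + n) (r * (σR ^ m) s)) + e', ?_⟩
    rw [Fc_add, Fc_single, add_mul, he', Fc_add]
    congr 1
    show (ι r * y ^ m) * Fc ι y d = _
    rw [Fc, Finsupp.mul_sum, Fc,
      sum_single_sum d (fun n => m + n) (fun n s => r * (σR ^ m) s)
        (fun p s => ι s * y ^ p) (fun n => by simp) (fun n a b => by simp [mul_add])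
        (fun p => by simp) (fun p a b => by simp [map_add, add_mul])]
    refine Finsupp.sum_congr fun n _ => ?_
    rw [mul_assoc, ← mul_assoc (y ^ m), ypow_comm ι y σR hrely, mul_assoc, ← pow_add,
      ← mul_assoc, ← map_mul]

theorem mem_adjoin_iff (ι : R →ₐ[k] A) (y : A) (σR : R ≃ₐ[k] R)
    (hrely : ∀ r : R, y * ι r = ι (σR r) * y) (a : A) :
    a ∈ Algebra.adjoin k (Set.range ⇑ι ∪ {y}) ↔ ∃ c, a = Fc ι y c := by
  constructor
  · intro h
    induction h using Algebra.adjoin_induction with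
    | mem z hz =>
      rcases hz with ⟨r, rfl⟩ | rfl
      · exact ⟨Finsupp.single 0 r, by simp [Fc_single]⟩
      · exact ⟨Finsupp.single 1 1, by simp [Fc_single]⟩
    | algebraMap t =>
      refine ⟨Finsupp.single 0 (algebraMap k R t), ?_⟩
      rw [Fc_single, pow_zero, mul_one, AlgHom.commutes]
    | add a b _ _ ha hb =>
      obtain ⟨c, rfl⟩ := ha; obtain ⟨d, rfl⟩ := hb
      exact ⟨c + d, (Fc_add ι y c d).symm⟩
    | mul a b _ _ ha hb =>
      obtain ⟨c, rfl⟩ := ha; obtain ⟨d, rfl⟩ := hb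
      obtain ⟨e, he⟩ := exists_Fc_mul ι y σR hrely c d
      exact ⟨e, he⟩
  · rintro ⟨c, rfl⟩
    exact Fc_mem_adjoin ι y c

/-- Embedding coefficients into the `(ℕ × ℕ)` basis at `x`-degree 0. -/
noncomputable def E0 (c : ℕ →₀ R) : (ℕ × ℕ) →₀ R := c.sum fun n r => Finsupp.single (0, n) r

/-- Embedding coefficients into the `(ℕ × ℕ)` basis at `x`-degree 1, scaled. -/
noncomputable def E1 (l : k) (c : ℕ →₀ R) : (ℕ × ℕ) →₀ R :=
  c.sum fun n r => Finsupp.single (1, n) (l ^ n • r)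

theorem G2_E0 (ι : R →ₐ[k] A) (x y : A) (c : ℕ →₀ R) :
    G2 ι x y (E0 c) = Fc ι y c := by
  rw [G2, E0,
    sum_single_sum c (fun n => ((0 : ℕ), n)) (fun _ r => r)
      (fun p s => ι s * x ^ p.1 * y ^ p.2) (fun n => rfl) (fun n a b => rfl)
      (fun p => by simp) (fun p a b => by simp [map_add, add_mul])]
  exact Finsupp.sum_congr fun n _ => by simp

theorem G2_E1 {l : k} (ι : R →ₐ[k] A) (x y : A)
    (hrelyx : y * x = l • (x * y)) (c : ℕ →₀ R) :
    G2 ι x y (E1 l c) = Fc ι y c * x := by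
  rw [G2, E1,
    sum_single_sum c (fun n => ((1 : ℕ), n)) (fun n r => l ^ n • r)
      (fun p s => ι s * x ^ p.1 * y ^ p.2) (fun n => by simp) (fun n a b => by simp)
      (fun p => by simp) (fun p a b => by simp [map_add, add_mul]),
    Fc, Finsupp.sum_mul]
  refine Finsupp.sum_congr fun n _ => ?_
  show ι (l ^ n • c n) * x ^ 1 * y ^ n = ι (c n) * y ^ n * x
  rw [mul_assoc (ι (c n)), ypow_x x y hrelyx n, mul_smul_comm, pow_one, map_smul,
    smul_mul_assoc, smul_mul_assoc, mul_assoc]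

theorem Fc_inj (ι : R →ₐ[k] A) (x y : A)
    (hbasis : ∀ a : A, ∃! c : (ℕ × ℕ) →₀ R,
      a = c.sum fun p r => ι r * x ^ p.1 * y ^ p.2)
    {c d : ℕ →₀ R} (h : Fc ι y c = Fc ι y d) : c = d := by
  obtain ⟨c0, _, hu⟩ := hbasis (Fc ι y c)
  have h1 : E0 c = c0 := hu _ (G2_E0 ι x y c).symm
  have h2 : E0 d = c0 := hu _ (by rw [h]; exact (G2_E0 ι x y d).symm)
  have h3 : E0 c = E0 d := h1.trans h2.symm
  ext n
  have := congrArg (fun u => u ((0 : ℕ), n)) h3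
  simpa [E0, sum_single_comp_apply' (f := fun n => ((0 : ℕ), n))
    (by intro a b hab; simpa using hab) (g := fun (_ : ℕ) (r : R) => r)
    (fun _ => rfl) (fun _ _ _ => rfl)] using this

theorem decomp_unique {l : k} (hl : l ≠ 0) (ι : R →ₐ[k] A) (x y : A)
    (hrelyx : y * x = l • (x * y))
    (hbasis : ∀ a : A, ∃! c : (ℕ × ℕ) →₀ R,
      a = c.sum fun p r => ι r * x ^ p.1 * y ^ p.2)
    {c c' d d' : ℕ →₀ R}
    (h : Fc ι y c * x + Fc ι y c' = Fc ι y d * x + Fc ι y d') :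
    c = d ∧ c' = d' := by
  obtain ⟨c0, _, hu⟩ := hbasis (Fc ι y c * x + Fc ι y c')
  have h1 : E1 l c + E0 c' = c0 := by
    refine hu _ ?_
    show Fc ι y c * x + Fc ι y c' = G2 ι x y (E1 l c + E0 c')
    rw [G2_add, G2_E0, G2_E1 ι x y hrelyx]
  have h2 : E1 l d + E0 d' = c0 := by
    refine hu _ ?_
    show Fc ι y c * x + Fc ι y c' = G2 ι x y (E1 l d + E0 d')
    rw [h, G2_add, G2_E0, G2_E1 ι x y hrelyx]
  have h3 : E1 l c + E0 c' = E1 l d + E0 d' := h1.trans h2.symm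
  have inj1 : Function.Injective (fun n : ℕ => ((1 : ℕ), n)) := by
    intro a b hab; simpa using hab
  have inj0 : Function.Injective (fun n : ℕ => ((0 : ℕ), n)) := by
    intro a b hab; simpa using hab
  have hcd : c = d := by
    ext n
    have := congrArg (fun u => u ((1 : ℕ), n)) h3
    simp only [Finsupp.add_apply] at this
    rw [E0, E1, E0, E1,
      sum_single_comp_apply' inj1 (g := fun m r => l ^ m • r) (fun _ => smul_zero _)
        (fun _ _ _ => smul_add _ _ _),
      sum_single_comp_apply' inj1 (g := fun m r => l ^ m • r) (fun _ => smul_zero _)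
        (fun _ _ _ => smul_add _ _ _),
      sum_single_comp_apply_ne (f := fun m : ℕ => ((0 : ℕ), m))
        (g := fun (_ : ℕ) (r : R) => r) (fun _ => rfl) (fun _ _ _ => rfl) _ _
        (fun m => by simp),
      sum_single_comp_apply_ne (f := fun m : ℕ => ((0 : ℕ), m))
        (g := fun (_ : ℕ) (r : R) => r) (fun _ => rfl) (fun _ _ _ => rfl) _ _
        (fun m => by simp), add_zero, add_zero] at this
    have := congrArg (fun z => (l⁻¹) ^ n • z) this
    simpa [smul_smul, inv_pow, inv_mul_cancel₀ (pow_ne_zero n hl)] using this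
  subst hcd
  have h4 : E0 c' = E0 d' := by
    exact add_left_cancel h3
  refine ⟨rfl, ?_⟩
  ext n
  have := congrArg (fun u => u ((0 : ℕ), n)) h4
  beta_reduce at this
  rw [E0, E0,
    sum_single_comp_apply' inj0 (g := fun (_ : ℕ) (r : R) => r) (fun _ => rfl)
      (fun _ _ _ => rfl),
    sum_single_comp_apply' inj0 (g := fun (_ : ℕ) (r : R) => r) (fun _ => rfl)
      (fun _ _ _ => rfl)] at this
  exact this

/-- The twist `τ'` on coefficients. -/
noncomputable def Tc (l : k) (τ : R ≃ₐ[k] R) (c : ℕ →₀ R) : ℕ →₀ R :=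
  c.sum fun n r => Finsupp.single n ((l⁻¹) ^ n • τ r)

/-- The inverse twist. -/
noncomputable def TIc (l : k) (τ : R ≃ₐ[k] R) (c : ℕ →₀ R) : ℕ →₀ R :=
  c.sum fun n r => Finsupp.single n (τ.symm (l ^ n • r))

/-- The derivation `δ'` on coefficients. -/
noncomputable def Dc (δ : R →ₗ[k] R) (c : ℕ →₀ R) : ℕ →₀ R :=
  c.sum fun n r => Finsupp.single n (δ r)

theorem Fc_Tc {l : k} (ι : R →ₐ[k] A) (y : A) (τ : R ≃ₐ[k] R) (c : ℕ →₀ R) :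
    Fc ι y (Tc l τ c) = c.sum fun n r => ι ((l⁻¹) ^ n • τ r) * y ^ n := by
  rw [Fc, Tc]
  exact sum_single_sum c id (fun n r => (l⁻¹) ^ n • τ r) (fun n s => ι s * y ^ n)
    (fun n => by simp) (fun n a b => by simp [map_add, smul_add])
    (fun n => by simp) (fun n a b => by simp [map_add, add_mul])

theorem Fc_Dc (ι : R →ₐ[k] A) (y : A) (δ : R →ₗ[k] R) (c : ℕ →₀ R) :
    Fc ι y (Dc δ c) = c.sum fun n r => ι (δ r) * y ^ n := by
  rw [Fc, Dc]
  exact sum_single_sum c id (fun n r => δ r) (fun n s => ι s * y ^ n)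
    (fun n => by simp) (fun n a b => by simp [map_add])
    (fun n => by simp) (fun n a b => by simp [map_add, add_mul])

theorem x_mul_Fc {l : k} (hl : l ≠ 0) (ι : R →ₐ[k] A) (x y : A)
    (τ : R ≃ₐ[k] R) (δ : R →ₗ[k] R)
    (hrelx : ∀ r : R, x * ι r = ι (τ r) * x + ι (δ r))
    (hrelyx : y * x = l • (x * y)) (c : ℕ →₀ R) :
    x * Fc ι y c = Fc ι y (Tc l τ c) * x + Fc ι y (Dc δ c) := by
  rw [Fc_Tc, Fc_Dc, Fc, Finsupp.mul_sum, Finsupp.sum_mul, ← Finsupp.sum_add]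
  refine Finsupp.sum_congr fun n _ => ?_
  rw [← mul_assoc, hrelx (c n), add_mul, mul_assoc (ι (τ (c n))),
    x_ypow hl x y hrelyx n, mul_smul_comm, ← mul_assoc, map_smul, smul_mul_assoc,
    smul_mul_assoc]

theorem Fc_smul (ι : R →ₐ[k] A) (y : A) (t : k) (c : ℕ →₀ R) :
    Fc ι y (t • c) = t • Fc ι y c := by
  rw [Fc, Finsupp.sum_smul_index' (fun n => by simp), Fc, Finsupp.smul_sum]
  exact Finsupp.sum_congr fun n _ => by rw [map_smul, smul_mul_assoc]

theorem TIc_Tc {l : k} (hl : l ≠ 0) (τ : R ≃ₐ[k] R) (c : ℕ →₀ R) :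
    TIc l τ (Tc l τ c) = c := by
  rw [Tc, TIc,
    sum_single_sum c (fun n => n) (fun n r => (l⁻¹) ^ n • τ r)
      (fun n s => Finsupp.single n (τ.symm (l ^ n • s)))
      (fun n => by simp) (fun n a b => by simp [map_add, smul_add])
      (fun n => by simp) (fun n a b => by simp [map_add, smul_add])]
  rw [show (fun (n : ℕ) (r : R) => Finsupp.single n (τ.symm (l ^ n • (l⁻¹) ^ n • τ r)))
      = fun (n : ℕ) (r : R) => Finsupp.single n r from ?_]
  · exact Finsupp.sum_single c
  · funext n r
    rw [smul_smul, ← mul_pow, mul_inv_cancel₀ hl, one_pow, one_smul, AlgEquiv.symm_apply_apply]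

theorem Tc_TIc {l : k} (hl : l ≠ 0) (τ : R ≃ₐ[k] R) (c : ℕ →₀ R) :
    Tc l τ (TIc l τ c) = c := by
  rw [Tc, TIc,
    sum_single_sum c (fun n => n) (fun n r => τ.symm (l ^ n • r))
      (fun n s => Finsupp.single n ((l⁻¹) ^ n • τ s))
      (fun n => by simp) (fun n a b => by simp [map_add, smul_add])
      (fun n => by simp) (fun n a b => by simp [map_add, smul_add])]
  rw [show (fun (n : ℕ) (r : R) => Finsupp.single n ((l⁻¹) ^ n • τ (τ.symm (l ^ n • r))))
      = fun (n : ℕ) (r : R) => Finsupp.single n r from ?_]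
  · exact Finsupp.sum_single c
  · funext n r
    rw [AlgEquiv.apply_symm_apply, smul_smul, ← mul_pow, inv_mul_cancel₀ hl, one_pow,
      one_smul]

theorem Dc_Tc_skew {q l : k} (τ : R ≃ₐ[k] R) (δ : R →ₗ[k] R)
    (hq : ∀ r : R, δ (τ r) = q • τ (δ r)) (c : ℕ →₀ R) :
    Dc δ (Tc l τ c) = q • Tc l τ (Dc δ c) := by
  rw [Dc, Tc,
    sum_single_sum c (fun n => n) (fun n r => (l⁻¹) ^ n • τ r)
      (fun n s => Finsupp.single n (δ s))
      (fun n => by simp) (fun n a b => by simp [map_add, smul_add])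
      (fun n => by simp) (fun n a b => by simp [map_add]),
    Tc, Dc,
    sum_single_sum c (fun n => n) (fun n r => δ r)
      (fun n s => Finsupp.single n ((l⁻¹) ^ n • τ s))
      (fun n => by simp) (fun n a b => by simp [map_add])
      (fun n => by simp) (fun n a b => by simp [map_add, smul_add]),
    Finsupp.smul_sum]
  refine Finsupp.sum_congr fun n _ => ?_
  rw [map_smul, hq, Finsupp.smul_single, smul_comm]

/-- Swap from `y,x`-order coefficients to `x,y`-order coefficients. -/
noncomputable def Sw (l : k) (c : (ℕ × ℕ) →₀ R) : (ℕ × ℕ) →₀ R :=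
  c.sum fun p r => Finsupp.single (p.2, p.1) (l ^ (p.1 * p.2) • r)

/-- Swap from `x,y`-order coefficients to `y,x`-order coefficients. -/
noncomputable def SwI (l : k) (c : (ℕ × ℕ) →₀ R) : (ℕ × ℕ) →₀ R :=
  c.sum fun p r => Finsupp.single (p.2, p.1) ((l⁻¹) ^ (p.1 * p.2) • r)

theorem G2_Sw {l : k} (ι : R →ₐ[k] A) (x y : A)
    (hrelyx : y * x = l • (x * y)) (c : (ℕ × ℕ) →₀ R) :
    G2 ι x y (Sw l c) = c.sum fun p r => ι r * y ^ p.1 * x ^ p.2 := by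
  rw [G2, Sw,
    sum_single_sum c (fun p => (p.2, p.1)) (fun p r => l ^ (p.1 * p.2) • r)
      (fun p s => ι s * x ^ p.1 * y ^ p.2)
      (fun p => by simp) (fun p a b => by simp [smul_add])
      (fun p => by simp) (fun p a b => by simp [map_add, add_mul])]
  refine Finsupp.sum_congr fun p _ => ?_
  show ι (l ^ (p.1 * p.2) • c p) * x ^ p.2 * y ^ p.1 = ι (c p) * y ^ p.1 * x ^ p.2
  rw [mul_assoc (ι (c p)), ypow_xpow x y hrelyx p.1 p.2, mul_smul_comm, map_smul,
    smul_mul_assoc, smul_mul_assoc, mul_comm p.1 p.2, mul_assoc]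

theorem Sw_SwI {l : k} (hl : l ≠ 0) (c : (ℕ × ℕ) →₀ R) : Sw l (SwI l c) = c := by
  rw [SwI, Sw,
    sum_single_sum c (fun p => (p.2, p.1)) (fun p r => (l⁻¹) ^ (p.1 * p.2) • r)
      (fun p s => Finsupp.single (p.2, p.1) (l ^ (p.1 * p.2) • s))
      (fun p => by simp) (fun p a b => by simp [smul_add])
      (fun p => by simp) (fun p a b => by simp [smul_add])]
  rw [show (fun (p : ℕ × ℕ) (r : R) =>
      Finsupp.single ((p.2, p.1).2, (p.2, p.1).1)
        (l ^ ((p.2, p.1).1 * (p.2, p.1).2) • (l⁻¹) ^ (p.1 * p.2) • r))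
      = fun (p : ℕ × ℕ) (r : R) => Finsupp.single p r from ?_]
  · exact Finsupp.sum_single c
  · funext p r
    rw [smul_smul]
    show Finsupp.single (p.1, p.2) ((l ^ (p.2 * p.1) * (l⁻¹) ^ (p.1 * p.2)) • r) = _
    rw [mul_comm p.2 p.1, ← mul_pow, mul_inv_cancel₀ hl, one_pow, one_smul]

theorem SwI_Sw {l : k} (hl : l ≠ 0) (c : (ℕ × ℕ) →₀ R) : SwI l (Sw l c) = c := by
  rw [Sw, SwI,
    sum_single_sum c (fun p => (p.2, p.1)) (fun p r => l ^ (p.1 * p.2) • r)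
      (fun p s => Finsupp.single (p.2, p.1) ((l⁻¹) ^ (p.1 * p.2) • s))
      (fun p => by simp) (fun p a b => by simp [smul_add])
      (fun p => by simp) (fun p a b => by simp [smul_add])]
  rw [show (fun (p : ℕ × ℕ) (r : R) =>
      Finsupp.single ((p.2, p.1).2, (p.2, p.1).1)
        ((l⁻¹) ^ ((p.2, p.1).1 * (p.2, p.1).2) • l ^ (p.1 * p.2) • r))
      = fun (p : ℕ × ℕ) (r : R) => Finsupp.single p r from ?_]
  · exact Finsupp.sum_single c
  · funext p r
    rw [smul_smul]
    show Finsupp.single (p.1, p.2) (((l⁻¹) ^ (p.2 * p.1) * l ^ (p.1 * p.2)) • r) = _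
    rw [mul_comm p.2 p.1, ← mul_pow, inv_mul_cancel₀ hl, one_pow, one_smul]

end SwitchVarsAux

open SwitchVarsAux

/-- Let `A = R[x; τ, δ][y; σ]` with `σ(R) = R` and `σ(x) = λx`, `λ ∈ k^×`.
Then `A = R[y; σ'][x; τ', δ']` where `σ' = σ|_R`, `τ'|_R = τ`, `δ'|_R = δ`,
`τ'(y) = λ⁻¹ y` and `δ'(y) = 0`; moreover if `(τ, δ)` is q-skew
(`δτ = qτδ`) then so is `(τ', δ')`. -/
theorem switching_variables {k R A : Type*} [Field k] [Ring R] [Algebra k R]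
    [Ring A] [Algebra k A]
    (q l : k) (hl : l ≠ 0)
    (τ : R ≃ₐ[k] R) (δ : R →ₗ[k] R)
    (hder : ∀ r s : R, δ (r * s) = τ r * δ s + δ r * s)
    (σR : R ≃ₐ[k] R)  -- the restriction `σ|_R` of `σ` to `R`
    (ι : R →ₐ[k] A) (x y : A)
    (hrelx : ∀ r : R, x * ι r = ι (τ r) * x + ι (δ r))
    (hrely : ∀ r : R, y * ι r = ι (σR r) * y)
    (hrelyx : y * x = l • (x * y))  -- `σ(x) = λx`
    (hbasis : ∀ a : A, ∃! c : (ℕ × ℕ) →₀ R,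
        a = c.sum fun p r => ι r * x ^ p.1 * y ^ p.2) :
    -- `A` is an iterated skew polynomial ring in the order `y`, then `x`:
    (∀ a : A, ∃! c : (ℕ × ℕ) →₀ R,
        a = c.sum fun p r => ι r * y ^ p.1 * x ^ p.2) ∧
    (x * y = l⁻¹ • (y * x)) ∧
    -- with automorphism `τ'` and `τ'`-derivation `δ'` on `R[y; σ']` such that
    -- `τ'|_R = τ`, `δ'|_R = δ`, `τ'(y) = λ⁻¹y`, `δ'(y) = 0`:
    (∃ (τ' : Algebra.adjoin k (Set.range ⇑ι ∪ {y}) ≃ₐ[k]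
          Algebra.adjoin k (Set.range ⇑ι ∪ {y}))
       (δ' : Algebra.adjoin k (Set.range ⇑ι ∪ {y}) →ₗ[k]
          Algebra.adjoin k (Set.range ⇑ι ∪ {y})),
      (∀ b : Algebra.adjoin k (Set.range ⇑ι ∪ {y}),
          x * (b : A) = (τ' b : A) * x + (δ' b : A)) ∧
      (∀ b c : Algebra.adjoin k (Set.range ⇑ι ∪ {y}),
          (δ' (b * c) : A) = (τ' b : A) * (δ' c : A) + (δ' b : A) * (c : A)) ∧
      (∀ (r : R) (h : ι r ∈ Algebra.adjoin k (Set.range ⇑ι ∪ {y})),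
          (τ' ⟨ι r, h⟩ : A) = ι (τ r) ∧ (δ' ⟨ι r, h⟩ : A) = ι (δ r)) ∧
      (∀ h : y ∈ Algebra.adjoin k (Set.range ⇑ι ∪ {y}),
          (τ' ⟨y, h⟩ : A) = l⁻¹ • y ∧ (δ' ⟨y, h⟩ : A) = 0) ∧
      -- if `(τ, δ)` is q-skew then `(τ', δ')` is q-skew:
      ((∀ r : R, δ (τ r) = q • τ (δ r)) →
        ∀ b : Algebra.adjoin k (Set.range ⇑ι ∪ {y}),
          δ' (τ' b) = q • τ' (δ' b))) := by
  classical
  refine ⟨?_, ?_, ?_⟩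
  · -- part 1 : the `y, x`-ordered basis
    intro a
    obtain ⟨c0, hc0, hu⟩ := hbasis a
    refine ⟨SwI l c0, ?_, ?_⟩
    · show a = (SwI l c0).sum fun p r => ι r * y ^ p.1 * x ^ p.2
      rw [← G2_Sw ι x y hrelyx, Sw_SwI hl, hc0]
      rfl
    · intro c' hcp
      have h1 : Sw l c' = c0 := hu (Sw l c') (by rw [hcp, ← G2_Sw ι x y hrelyx]; rfl)
      rw [← SwI_Sw hl c', h1]
  · rw [hrelyx, smul_smul, inv_mul_cancel₀ hl, one_smul]
  · -- part 3
    have memF : ∀ c, Fc ι y c ∈ Algebra.adjoin k (Set.range ⇑ι ∪ {y}) :=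
      fun c => Fc_mem_adjoin ι y c
    choose rep hrep using
      fun b : Algebra.adjoin k (Set.range ⇑ι ∪ {y}) =>
        (mem_adjoin_iff ι y σR hrely (b : A)).1 b.2
    let tf : Algebra.adjoin k (Set.range ⇑ι ∪ {y}) →
        Algebra.adjoin k (Set.range ⇑ι ∪ {y}) :=
      fun b => ⟨Fc ι y (Tc l τ (rep b)), memF _⟩
    let ti : Algebra.adjoin k (Set.range ⇑ι ∪ {y}) →
        Algebra.adjoin k (Set.range ⇑ι ∪ {y}) :=
      fun b => ⟨Fc ι y (TIc l τ (rep b)), memF _⟩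
    let df : Algebra.adjoin k (Set.range ⇑ι ∪ {y}) →
        Algebra.adjoin k (Set.range ⇑ι ∪ {y}) :=
      fun b => ⟨Fc ι y (Dc δ (rep b)), memF _⟩
    have heqn : ∀ b : Algebra.adjoin k (Set.range ⇑ι ∪ {y}),
        x * (b : A) = (tf b : A) * x + (df b : A) := by
      intro b
      rw [hrep b]
      exact x_mul_Fc hl ι x y τ δ hrelx hrelyx (rep b)
    have hUniq : ∀ t d t' d' : Algebra.adjoin k (Set.range ⇑ι ∪ {y}),
        (t : A) * x + (d : A) = (t' : A) * x + (d' : A) → t = t' ∧ d = d' := by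
      intro t d t' d' h
      rw [hrep t, hrep d, hrep t', hrep d'] at h
      obtain ⟨h1, h2⟩ := decomp_unique hl ι x y hrelyx hbasis h
      exact ⟨Subtype.ext (by rw [hrep t, hrep t', h1]),
        Subtype.ext (by rw [hrep d, hrep d', h2])⟩
    have char : ∀ b t d : Algebra.adjoin k (Set.range ⇑ι ∪ {y}),
        x * (b : A) = (t : A) * x + (d : A) → tf b = t ∧ df b = d :=
      fun b t d h => hUniq _ _ _ _ ((heqn b).symm.trans h)
    have hrepF : ∀ (c : ℕ →₀ R) (h : Fc ι y c ∈ Algebra.adjoin k (Set.range ⇑ι ∪ {y})),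
        rep ⟨Fc ι y c, h⟩ = c :=
      fun c h => (Fc_inj ι x y hbasis (hrep ⟨Fc ι y c, h⟩)).symm
    have hrep_tf : ∀ b, rep (tf b) = Tc l τ (rep b) := fun b => hrepF _ _
    have hrep_df : ∀ b, rep (df b) = Dc δ (rep b) := fun b => hrepF _ _
    have hli : Function.LeftInverse ti tf := by
      intro b
      refine Subtype.ext ?_
      show Fc ι y (TIc l τ (rep (tf b))) = (b : A)
      rw [hrep_tf, TIc_Tc hl, ← hrep b]
    have hri : Function.RightInverse ti tf := by
      intro b
      refine Subtype.ext ?_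
      show Fc ι y (Tc l τ (rep (ti b))) = (b : A)
      have : rep (ti b) = TIc l τ (rep b) := hrepF _ _
      rw [this, Tc_TIc hl, ← hrep b]
    have hmul : ∀ a b, tf (a * b) = tf a * tf b ∧ df (a * b) = tf a * df b + df a * b := by
      intro a b
      refine char _ _ _ ?_
      show x * ((a : A) * (b : A)) = ((tf a : A) * (tf b : A)) * x
        + ((tf a : A) * (df b : A) + (df a : A) * (b : A))
      rw [← mul_assoc, heqn a, add_mul, mul_assoc, heqn b, mul_add, ← mul_assoc,
        add_assoc]
    have hadd : ∀ a b, tf (a + b) = tf a + tf b ∧ df (a + b) = df a + df b := by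
      intro a b
      refine char _ _ _ ?_
      show x * ((a : A) + (b : A)) = ((tf a : A) + (tf b : A)) * x
        + ((df a : A) + (df b : A))
      rw [mul_add, heqn a, heqn b, add_mul]
      abel
    have hsmul : ∀ (t : k) b, tf (t • b) = t • tf b ∧ df (t • b) = t • df b := by
      intro t b
      refine char _ _ _ ?_
      show x * (t • (b : A)) = (t • (tf b : A)) * x + t • (df b : A)
      rw [mul_smul_comm, heqn b, smul_add, smul_mul_assoc]
    have hcomm : ∀ t : k, tf (algebraMap k _ t) = algebraMap k _ t
        ∧ df (algebraMap k _ t) = 0 := by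
      intro t
      refine char _ _ _ ?_
      show x * algebraMap k A t = algebraMap k A t * x + (0 : A)
      rw [add_zero, Algebra.commutes]
    refine ⟨⟨⟨tf, ti, hli, hri⟩, fun a b => (hmul a b).1, fun a b => (hadd a b).1,
        fun t => (hcomm t).1⟩,
      ⟨⟨df, fun a b => (hadd a b).2⟩, fun t b => (hsmul t b).2⟩, ?_, ?_, ?_, ?_, ?_⟩
    · exact heqn
    · intro b c
      have := congrArg (Subtype.val) (hmul b c).2
      simpa using this
    · intro r h
      have hmem1 : ι (τ r) ∈ Algebra.adjoin k (Set.range ⇑ι ∪ {y}) :=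
        Algebra.subset_adjoin (Set.mem_union_left _ ⟨_, rfl⟩)
      have hmem2 : ι (δ r) ∈ Algebra.adjoin k (Set.range ⇑ι ∪ {y}) :=
        Algebra.subset_adjoin (Set.mem_union_left _ ⟨_, rfl⟩)
      have hc := char ⟨ι r, h⟩ ⟨ι (τ r), hmem1⟩ ⟨ι (δ r), hmem2⟩ (hrelx r)
      exact ⟨congrArg Subtype.val hc.1, congrArg Subtype.val hc.2⟩
    · intro h
      have hymem : y ∈ Algebra.adjoin k (Set.range ⇑ι ∪ {y}) :=
        Algebra.subset_adjoin (Set.mem_union_right _ rfl)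
      have hsm : l⁻¹ • y ∈ Algebra.adjoin k (Set.range ⇑ι ∪ {y}) :=
        Subalgebra.smul_mem _ hymem l⁻¹
      have hc := char ⟨y, h⟩ ⟨l⁻¹ • y, hsm⟩ ⟨0, zero_mem _⟩ ?_
      · exact ⟨congrArg Subtype.val hc.1, congrArg Subtype.val hc.2⟩
      · show x * y = (l⁻¹ • y) * x + (0 : A)
        rw [add_zero, smul_mul_assoc, hrelyx, smul_smul, inv_mul_cancel₀ hl, one_smul]
    · intro hq b
      refine Subtype.ext ?_
      show Fc ι y (Dc δ (rep (tf b))) = ((q • tf (df b) : _) : A)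
      have h2 : ((q • tf (df b) : _) : A) = q • Fc ι y (Tc l τ (rep (df b))) := rfl
      rw [h2, hrep_tf, hrep_df, Dc_Tc_skew τ δ hq, Fc_smul]
end

section
/- Let A be a noetherian domain, S ⊆ A∖{0} an Ore set, and T an Ore set in AS^{-1}∖{0} with S ⊆ T. Then T̃ := T ∩ A is an Ore set in A containing S, and A T̃^{-1} = (A S^{-1}) T^{-1} (as subrings of the division ring of fractions of A). -/
/-- Let `A` be a noetherian domain with division ring of fractions `D`
(via `φ : A → D`), `S ⊆ A∖{0}` an Ore set, and `T` an Ore set in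
`AS⁻¹ ∖ {0}` with `S ⊆ T`.  Then `T̃ := T ∩ A` is an Ore set in `A`
containing `S`, and `A T̃⁻¹ = (A S⁻¹) T⁻¹` as subrings of `D`. -/
theorem ore_set_intersection {A D : Type*} [Ring A] [IsNoetherianRing A]
    [IsDomain A] [DivisionRing D]
    (φ : A →+* D) (hφ : Function.Injective φ)
    (hDfrac : ∀ u : D, ∃ a b : A, b ≠ 0 ∧ u = φ a * (φ b)⁻¹)
    (S : Submonoid A) (hS0 : (0 : A) ∉ S)
    (hSl : ∀ a : A, ∀ s ∈ S, ∃ b, ∃ t ∈ S, t * a = b * s)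
    (hSr : ∀ a : A, ∀ s ∈ S, ∃ b, ∃ t ∈ S, a * t = s * b)
    -- `ASinv` is the localization `AS⁻¹`, identified with a subset of `D`:
    (ASinv : Set D) (hASinv : ASinv = {u : D | ∃ a, ∃ s ∈ S, u = φ a * (φ s)⁻¹})
    (T : Submonoid D) (hT0 : (0 : D) ∉ T)
    (hTsub : (T : Set D) ⊆ ASinv)
    (hST : ∀ s ∈ S, φ s ∈ T)
    (hTl : ∀ a ∈ ASinv, ∀ t ∈ T, ∃ b ∈ ASinv, ∃ u ∈ T, u * a = b * t)
    (hTr : ∀ a ∈ ASinv, ∀ t ∈ T, ∃ b ∈ ASinv, ∃ u ∈ T, a * u = t * b) :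
    -- `T̃ = T ∩ A` contains `S`:
    (∀ s ∈ S, s ∈ {a : A | φ a ∈ T}) ∧
    -- `T̃` is an Ore set in `A`:
    (∀ a : A, ∀ t ∈ {a : A | φ a ∈ T}, ∃ b, ∃ u ∈ {a : A | φ a ∈ T}, u * a = b * t) ∧
    (∀ a : A, ∀ t ∈ {a : A | φ a ∈ T}, ∃ b, ∃ u ∈ {a : A | φ a ∈ T}, a * u = t * b) ∧
    -- `A T̃⁻¹ = (A S⁻¹) T⁻¹` inside `D`:
    {u : D | ∃ a, ∃ t ∈ {a : A | φ a ∈ T}, u = φ a * (φ t)⁻¹}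
      = {u : D | ∃ b ∈ ASinv, ∃ t ∈ T, u = b * t⁻¹} := by
  -- images of elements of `S` are nonzero
  have hφ0 : ∀ s ∈ S, φ s ≠ 0 := by
    intro s hs h
    apply hS0
    have hs0 : s = 0 := hφ (by simpa using h)
    rwa [hs0] at hs
  -- every image of `A` lies in `ASinv`
  have hmemA : ∀ a : A, φ a ∈ ASinv := by
    intro a
    rw [hASinv]
    exact ⟨a, 1, S.one_mem, by simp⟩
  -- right fraction form for elements of `T`, with numerator in `T̃`
  have rform : ∀ u ∈ T, ∃ e r, r ∈ S ∧ φ e ∈ T ∧ u = φ e * (φ r)⁻¹ ∧ u * φ r = φ e := by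
    intro u hu
    have h := hTsub hu
    rw [hASinv] at h
    obtain ⟨e, r, hr, hue⟩ := h
    have h2 : u * φ r = φ e := by
      rw [hue, mul_assoc, inv_mul_cancel₀ (hφ0 r hr), mul_one]
    exact ⟨e, r, hr, h2 ▸ T.mul_mem hu (hST r hr), hue, h2⟩
  -- left fraction form for elements of `T`, with numerator in `T̃`
  have lform : ∀ u ∈ T, ∃ e r, r ∈ S ∧ φ e ∈ T ∧ φ r * u = φ e := by
    intro u hu
    obtain ⟨e, r, hr, he, hue, h2⟩ := rform u hu
    obtain ⟨e₁, r₁, hr₁, heq⟩ := hSl e r hr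
    have h1 : φ r₁ * u = φ e₁ := by
      rw [hue, ← mul_assoc, ← map_mul, heq, map_mul, mul_assoc,
        mul_inv_cancel₀ (hφ0 r hr), mul_one]
    exact ⟨e₁, r₁, hr₁, h1 ▸ T.mul_mem (hST r₁ hr₁) hu, h1⟩
  -- commuting an inverse of `S` past an element of `A`
  have swap : ∀ (r : A), ∀ s ∈ S, ∃ r₃ s₃, s₃ ∈ S ∧ (φ s)⁻¹ * φ r = φ r₃ * (φ s₃)⁻¹ := by
    intro r s hs
    obtain ⟨r₃, s₃, hs₃, heq⟩ := hSr r s hs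
    refine ⟨r₃, s₃, hs₃, ?_⟩
    have key : φ r = φ s * (φ r₃ * (φ s₃)⁻¹) := by
      rw [← mul_assoc, eq_mul_inv_iff_mul_eq₀ (hφ0 s₃ hs₃), ← map_mul, ← map_mul, heq]
    rw [key, ← mul_assoc, inv_mul_cancel₀ (hφ0 s hs), one_mul]
  refine ⟨fun s hs => hST s hs, ?_, ?_, ?_⟩
  · -- left Ore condition for `T̃`
    intro a t ht
    obtain ⟨b', hb', u', hu', heq⟩ := hTl (φ a) (hmemA a) (φ t) ht
    obtain ⟨e₁, r₁, hr₁, he₁, h1⟩ := lform u' hu'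
    rw [hASinv] at hb'
    obtain ⟨c, s, hs, hb'eq⟩ := hb'
    obtain ⟨c₁, s₁, hs₁, heq₂⟩ := hSl (r₁ * c) s hs
    refine ⟨c₁, s₁ * e₁, by simpa using T.mul_mem (hST s₁ hs₁) he₁, ?_⟩
    apply hφ
    have hc₁ : φ c₁ = φ s₁ * (φ r₁ * φ c) * (φ s)⁻¹ := by
      rw [eq_mul_inv_iff_mul_eq₀ (hφ0 s hs), ← map_mul, ← map_mul, ← map_mul, heq₂]
    have h2 : φ e₁ * φ a = φ r₁ * (b' * φ t) := by
      rw [← h1, mul_assoc, heq]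
    calc φ (s₁ * e₁ * a) = φ s₁ * (φ e₁ * φ a) := by rw [map_mul, map_mul, mul_assoc]
      _ = φ s₁ * (φ r₁ * (φ c * (φ s)⁻¹ * φ t)) := by rw [h2, hb'eq]
      _ = φ s₁ * (φ r₁ * φ c) * (φ s)⁻¹ * φ t := by simp only [mul_assoc]
      _ = φ c₁ * φ t := by rw [← hc₁]
      _ = φ (c₁ * t) := by rw [map_mul]
  · -- right Ore condition for `T̃`
    intro a t ht
    obtain ⟨b', hb', u', hu', heq⟩ := hTr (φ a) (hmemA a) (φ t) ht
    obtain ⟨e, r, hr, he, hue, h1⟩ := rform u' hu'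
    rw [hASinv] at hb'
    obtain ⟨c, s, hs, hb'eq⟩ := hb'
    obtain ⟨r₂, s₂, hs₂, key⟩ := swap r s hs
    refine ⟨c * r₂, e * s₂, by simpa using T.mul_mem he (hST s₂ hs₂), ?_⟩
    apply hφ
    calc φ (a * (e * s₂)) = (φ a * u') * (φ r * φ s₂) := by
          rw [map_mul, map_mul, ← h1]; simp only [mul_assoc]
      _ = φ t * (φ c * ((φ s)⁻¹ * φ r) * φ s₂) := by
          rw [heq, hb'eq]; simp only [mul_assoc]
      _ = φ t * (φ c * (φ r₂ * ((φ s₂)⁻¹ * φ s₂))) := by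
          rw [key]; simp only [mul_assoc]
      _ = φ (t * (c * r₂)) := by
          rw [inv_mul_cancel₀ (hφ0 s₂ hs₂), mul_one, map_mul, map_mul]
  · -- the two localizations coincide inside `D`
    ext u
    constructor
    · rintro ⟨a, t, ht, rfl⟩
      exact ⟨φ a, hmemA a, φ t, ht, rfl⟩
    · rintro ⟨b, hb, t', ht', rfl⟩
      rw [hASinv] at hb
      obtain ⟨c, s, hs, rfl⟩ := hb
      obtain ⟨e, r, hr, he, hue, h1⟩ := rform t' ht'
      have ht'0 : t' ≠ 0 := fun h => hT0 (h ▸ ht')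
      have he0 : φ e ≠ 0 := by
        rw [← h1]
        exact mul_ne_zero ht'0 (hφ0 r hr)
      have hinv : t'⁻¹ = φ r * (φ e)⁻¹ := by
        rw [hue, mul_inv_rev, inv_inv]
      obtain ⟨r₃, s₃, hs₃, key⟩ := swap r s hs
      refine ⟨c * r₃, e * s₃, by simpa using T.mul_mem he (hST s₃ hs₃), ?_⟩
      calc φ c * (φ s)⁻¹ * t'⁻¹ = φ c * ((φ s)⁻¹ * φ r * (φ e)⁻¹) := by
            rw [hinv]; simp only [mul_assoc]
        _ = φ c * (φ r₃ * ((φ s₃)⁻¹ * (φ e)⁻¹)) := by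
            rw [key]; simp only [mul_assoc]
        _ = φ (c * r₃) * (φ (e * s₃))⁻¹ := by
            rw [map_mul, map_mul, mul_inv_rev]; simp only [mul_assoc]
end

section
/- For the n×n integer matrix A_n with zeros on the diagonal, +1 above the diagonal and −1 below the diagonal, the characteristic polynomial is χ_n(x) = ½(x+1)^n + ½(x−1)^n; equivalently, χ_n(x) is the sum of the terms of degree ≡ n (mod 2) in the binomial expansion of (x+1)^n, and for n ≥ 3 it satisfies the recursion χ_n(x) = χ_{n−1}(x)(x+1) − (x−1)^{n−1}. -/
/-- The skew-symmetric integer matrix `A_n` with `0` on the diagonal,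
`+1` above it and `−1` below it. -/
def An (n : ℕ) : Matrix (Fin n) (Fin n) ℤ :=
  Matrix.of fun i j => if (i : ℕ) < (j : ℕ) then 1
    else if (j : ℕ) < (i : ℕ) then -1 else 0

open Polynomial Matrix

noncomputable def MM (n : ℕ) : Matrix (Fin n) (Fin n) (Polynomial ℤ) :=
  Matrix.of fun i j => if (i : ℕ) < (j : ℕ) then -1
    else if (j : ℕ) < (i : ℕ) then 1 else X

lemma charmatrix_An (n : ℕ) : charmatrix (An n) = MM n := by
  apply Matrix.ext
  intro i j
  rcases eq_or_ne i j with rfl | h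
  · simp [An, MM, charmatrix_apply_eq]
  · rw [charmatrix_apply_ne _ _ _ h]
    have h' : (i : ℕ) ≠ (j : ℕ) := fun hc => h (Fin.ext hc)
    simp only [An, MM, Matrix.of_apply]
    split_ifs <;> first | (exfalso; omega) | simp

noncomputable def EE (n : ℕ) : Matrix (Fin n) (Fin n) (Polynomial ℤ) :=
  Matrix.of fun i j => if i = j then 1 else if (j : ℕ) = (i : ℕ) + 1 then -1 else 0

lemma det_EE (n : ℕ) : (EE n).det = 1 := by
  rw [Matrix.det_of_upperTriangular (M := EE n)]
  · simp [EE]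
  · intro i j hij
    have hj : (j : ℕ) < (i : ℕ) := hij
    simp only [EE, Matrix.of_apply]
    rw [if_neg (fun hc => by simp [hc] at hj), if_neg (by omega)]

noncomputable def BB (n : ℕ) : Matrix (Fin (n+1)) (Fin (n+1)) (Polynomial ℤ) :=
  Matrix.of fun i j =>
    if (i : ℕ) = n then (if (j : ℕ) = n then X else 1)
    else if (j : ℕ) = (i : ℕ) then X - 1
    else if (j : ℕ) = (i : ℕ) + 1 then -(X + 1) else 0

lemma EE_mul_MM (n : ℕ) : EE (n+1) * MM (n+1) = BB n := by
  apply Matrix.ext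
  intro i j
  rw [Matrix.mul_apply]
  have hsplit : ∀ k : Fin (n+1),
      EE (n+1) i k * MM (n+1) k j =
      (if k = i then MM (n+1) k j else 0)
        + (if (k : ℕ) = (i : ℕ) + 1 then -(MM (n+1) k j) else 0) := by
    intro k
    simp only [EE, Matrix.of_apply]
    rcases eq_or_ne i k with rfl | h
    · simp
    · rw [if_neg h, if_neg (Ne.symm h)]
      split_ifs <;> ring
  rw [Finset.sum_congr rfl (fun k _ => hsplit k), Finset.sum_add_distrib,
    Finset.sum_ite_eq' Finset.univ i fun k => MM (n+1) k j]
  simp only [Finset.mem_univ, if_true]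
  rcases lt_or_ge (i : ℕ) n with hi | hi
  · have hi1 : (i : ℕ) + 1 < n + 1 := by omega
    rw [Finset.sum_eq_single (⟨(i : ℕ) + 1, hi1⟩ : Fin (n+1))]
    · simp only [if_pos rfl]
      simp only [MM, BB, Matrix.of_apply, Fin.val_mk]
      split_ifs <;> first | ring1 | (exfalso; omega)
    · intro b _ hb
      rw [if_neg (fun hc => hb (Fin.ext (by simpa using hc)))]
    · intro hc; exact absurd (Finset.mem_univ _) hc
  · have hi' : (i : ℕ) = n := by omega
    rw [Finset.sum_eq_zero]
    · simp only [MM, BB, Matrix.of_apply, add_zero]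
      split_ifs <;> first | ring1 | (exfalso; omega)
    · intro k _
      rw [if_neg (by omega)]

lemma submatrix_BB (n : ℕ) :
    (BB (n+1)).submatrix Fin.succ Fin.succ = BB n := by
  apply Matrix.ext
  intro i j
  simp only [Matrix.submatrix_apply, Fin.succAbove_zero, BB, Matrix.of_apply, Fin.val_succ]
  split_ifs <;> first | rfl | omega

lemma det_BB_sub_last (n : ℕ) :
    ((BB (n+1)).submatrix (Fin.succAbove (Fin.last (n+1))) Fin.succ).det
      = (-(X + 1)) ^ (n + 1) := by
  have hlow : ∀ i j : Fin (n+1), (j : ℕ) < (i : ℕ) →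
      ((BB (n+1)).submatrix (Fin.succAbove (Fin.last (n+1))) Fin.succ) j i = 0 := by
    intro i j hji
    simp only [Matrix.submatrix_apply, Fin.succAbove_last, BB, Matrix.of_apply,
      Fin.coe_castSucc, Fin.val_succ]
    split_ifs <;> first | rfl | (exfalso; omega) | contradiction | simp_all
  rw [Matrix.det_of_lowerTriangular _ (fun i j h => hlow j i (Fin.lt_iff_val_lt_val.mp (OrderDual.toDual_lt_toDual.mp h)))]
  have hd : ∀ i : Fin (n+1),
      ((BB (n+1)).submatrix (Fin.succAbove (Fin.last (n+1))) Fin.succ) i i = -(X+1) := by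
    intro i
    simp only [Matrix.submatrix_apply, Fin.succAbove_last, BB, Matrix.of_apply,
      Fin.coe_castSucc, Fin.val_succ]
    split_ifs <;> first | rfl | (exfalso; omega) | contradiction | simp_all
  rw [Finset.prod_congr rfl (fun i _ => hd i)]
  simp [Finset.prod_const]

lemma det_BB_succ (n : ℕ) :
    (BB (n+1)).det = (X - 1) * (BB n).det + (X + 1) ^ (n + 1) := by
  rw [Matrix.det_succ_column_zero, Fin.sum_univ_succ]
  have h0 : BB (n+1) 0 0 = X - 1 := by
    simp only [BB, Matrix.of_apply, Fin.val_zero]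
    split_ifs <;> first | rfl | (exfalso; omega) | contradiction | simp_all
  have hval : ((Fin.last n).succ : Fin (n+2)) = Fin.last (n+1) := by ext; simp
  have hrest : ∀ i : Fin (n+1),
      (-1 : Polynomial ℤ) ^ ((i.succ : Fin (n+2)) : ℕ) * BB (n+1) i.succ 0 *
        ((BB (n+1)).submatrix (Fin.succAbove i.succ) Fin.succ).det =
      if i = Fin.last n then (X + 1) ^ (n + 1) else 0 := by
    intro i
    rcases eq_or_ne i (Fin.last n) with rfl | hi
    · rw [if_pos rfl, hval]
      have hentry : BB (n+1) (Fin.last (n+1)) 0 = 1 := by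
        simp only [BB, Matrix.of_apply, Fin.val_zero, Fin.val_last]
        split_ifs <;> first | rfl | (exfalso; omega) | contradiction | simp_all
      rw [hentry, det_BB_sub_last]
      simp only [Fin.val_last, mul_one]
      rw [neg_pow (X+1 : Polynomial ℤ) (n+1), ← mul_assoc, ← mul_pow]
      simp
    · rw [if_neg hi]
      have h1 : (i : ℕ) < n := by
        have h2 := i.isLt
        have h3 : (i : ℕ) ≠ n := fun hc => hi (Fin.ext (by simp [hc]))
        omega
      have hentry : BB (n+1) i.succ 0 = 0 := by
        simp only [BB, Matrix.of_apply, Fin.val_succ, Fin.val_zero]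
        split_ifs <;> first | rfl | (exfalso; omega) | contradiction | simp_all
      rw [hentry]
      ring
  rw [Finset.sum_congr rfl (fun i _ => hrest i),
    Finset.sum_ite_eq' Finset.univ (Fin.last n) (fun _ => (X + 1) ^ (n + 1))]
  simp only [Finset.mem_univ, if_true, Fin.val_zero, pow_zero, one_mul, h0,
    Fin.succAbove_zero, submatrix_BB n]

lemma det_MM_eq (n : ℕ) : (MM (n+1)).det = (BB n).det := by
  have h := congrArg Matrix.det (EE_mul_MM n)
  rwa [Matrix.det_mul, det_EE, one_mul] at h

lemma two_det_BB : ∀ n, 2 * (BB n).det = (X + 1) ^ (n+1) + (X - 1) ^ (n+1)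
  | 0 => by
    have h1 : (BB 0).det = X := by
      rw [Matrix.det_fin_one]
      simp [BB]
    rw [h1]; ring
  | (n+1) => by
    rw [det_BB_succ n]
    have ih := two_det_BB n
    linear_combination (X - 1) * ih

lemma two_charpoly (n : ℕ) : 2 * (An n).charpoly = (X + 1) ^ n + (X - 1) ^ n := by
  rw [Matrix.charpoly, charmatrix_An]
  cases n with
  | zero => rw [Matrix.det_fin_zero]; ring
  | succ n => rw [det_MM_eq, two_det_BB]

lemma twoNZ : (2 : Polynomial ℤ) ≠ 0 := by
  intro h
  simpa using congrArg (fun p => p.coeff 0) h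

open Polynomial in
/-- The characteristic polynomial `χ_n` of `A_n` satisfies
`χ_n(x) = ½((x+1)^n + (x−1)^n)`; equivalently, `χ_n` is the sum of the terms
of degree `≡ n (mod 2)` of the binomial expansion of `(x+1)^n`; and for
`n ≥ 3` it satisfies `χ_n(x) = χ_{n−1}(x)(x+1) − (x−1)^{n−1}`. -/
theorem An_charpoly (n : ℕ) :
    (2 : Polynomial ℤ) * (An n).charpoly = (X + 1) ^ n + (X - 1) ^ n ∧
    (∀ i : ℕ, (An n).charpoly.coeff i =
        if i % 2 = n % 2 then (n.choose i : ℤ) else 0) ∧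
    (3 ≤ n →
      (An n).charpoly = (An (n - 1)).charpoly * (X + 1) - (X - 1) ^ (n - 1)) := by
  refine ⟨two_charpoly n, ?_, ?_⟩
  · intro i
    have hc := congrArg (fun p => p.coeff i) (two_charpoly n)
    have h2C : (2 : Polynomial ℤ) = C 2 := by norm_num
    rw [h2C] at hc
    simp only [Polynomial.coeff_C_mul, Polynomial.coeff_add] at hc
    rw [Polynomial.coeff_X_add_one_pow, show (X - 1 : Polynomial ℤ) = X + C (-1) by rw [Polynomial.C_neg, Polynomial.C_1]; ring,
      Polynomial.coeff_X_add_C_pow] at hc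
    rcases le_or_gt i n with hi | hi
    · rcases Nat.even_or_odd (n - i) with he | ho
      · have h1 : ((-1 : ℤ)) ^ (n - i) = 1 := he.neg_one_pow
        have hp : i % 2 = n % 2 := by
          rw [Nat.even_iff] at he; omega
        rw [if_pos hp]
        rw [h1, one_mul] at hc
        omega
      · have h1 : ((-1 : ℤ)) ^ (n - i) = -1 := ho.neg_one_pow
        have hp : ¬ (i % 2 = n % 2) := by
          rw [Nat.odd_iff] at ho; omega
        rw [if_neg hp]
        rw [h1] at hc
        omega
    · have hch : n.choose i = 0 := Nat.choose_eq_zero_of_lt hi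
      rw [hch] at hc
      simp only [Nat.cast_zero, mul_zero, add_zero, zero_add] at hc
      have : (An n).charpoly.coeff i = 0 := by omega
      rw [this, hch]
      simp
  · intro hn
    obtain ⟨m, rfl⟩ : ∃ m, n = m + 1 := ⟨n - 1, by omega⟩
    show (An (m+1)).charpoly = (An m).charpoly * (X + 1) - (X - 1) ^ m
    apply mul_left_cancel₀ twoNZ
    have h1 := two_charpoly (m + 1)
    have h2 := two_charpoly m
    rw [h1]
    linear_combination (-(X + 1)) * h2
end
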